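/- arXiv:1703.08480 — 6 statements merged into one kernel-verified Lean document; each statement's English description precedes it below -/
import Mathlib

section
/- For the LTI system y = G_u u + G_d d + G_f f (with w ≡ 0), the j-th fault f_j is detectable (i.e., there exists a fault detection filter Q with Q·[G_u; I]=0, Q·[G_d;0]=0, and Q·[G_{f_j};0] ≠ 0) if and only if rank [G_d(λ) G_{f_j}(λ)] > rank G_d(λ), where rank denotes normal rank over the field of rational functions. -/
/-!
Statement 0: For the LTI system y = G_u u + G_d d + G_f f (w ≡ 0), the j-th fault f_j
is detectable (i.e., there exists a proper stable fault detection filter Q with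
Q·[G_u; I]=0, Q·[G_d;0]=0, and Q·[G_{f_j};0] ≠ 0) if and only if
rank [G_d(λ)  G_{f_j}(λ)] > rank G_d(λ), ranks over the field of rational functions.
-/

open Matrix Polynomial

noncomputable section

/-- A real rational function is proper: the degree of its numerator does not exceed
the degree of its denominator. -/
def RatFunc.IsProperR (f : RatFunc ℝ) : Prop :=
  f.num.natDegree ≤ f.denom.natDegree

/-- A real rational function is stable (continuous time): every complex pole
(root of the denominator) has negative real part. -/
def RatFunc.IsStableR (f : RatFunc ℝ) : Prop :=
  ∀ z : ℂ, (f.denom.map (algebraMap ℝ ℂ)).IsRoot z → z.re < 0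

/-- A rational matrix is proper if all its entries are proper. -/
def Matrix.IsProperR {m n : Type*} (G : Matrix m n (RatFunc ℝ)) : Prop :=
  ∀ i j, (G i j).IsProperR

/-- A rational matrix is stable if all its entries are stable. -/
def Matrix.IsStableR {m n : Type*} (G : Matrix m n (RatFunc ℝ)) : Prop :=
  ∀ i j, (G i j).IsStableR

/-- The `j`-th column of a rational matrix, as a one-column matrix. -/
def colMat {p mf : ℕ} (G : Matrix (Fin p) (Fin mf) (RatFunc ℝ)) (j : Fin mf) :
    Matrix (Fin p) (Fin 1) (RatFunc ℝ) :=
  Matrix.of fun i _ => G i j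

/-- Any rational function `P / (X+1)^M` with `deg P ≤ M` is proper and stable. -/
lemma proper_stable_aux (P : ℝ[X]) (M : ℕ) (hdeg : P.natDegree ≤ M) :
    (algebraMap ℝ[X] (RatFunc ℝ) P / algebraMap ℝ[X] (RatFunc ℝ) ((X + C 1) ^ M)).IsProperR ∧
    (algebraMap ℝ[X] (RatFunc ℝ) P / algebraMap ℝ[X] (RatFunc ℝ) ((X + C 1) ^ M)).IsStableR := by
  set D : ℝ[X] := (X + C 1) ^ M with hD
  have hDne : D ≠ 0 := pow_ne_zero _ (X_add_C_ne_zero 1)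
  have hDdeg : D.natDegree = M := by
    rw [hD, natDegree_pow, natDegree_X_add_C, mul_one]
  set g : RatFunc ℝ := algebraMap ℝ[X] (RatFunc ℝ) P / algebraMap ℝ[X] (RatFunc ℝ) D with hg
  by_cases hg0 : g = 0
  · constructor
    · rw [RatFunc.IsProperR, hg0, RatFunc.num_zero]
      simp
    · intro z hz
      rw [hg0, RatFunc.denom_zero] at hz
      simp [Polynomial.IsRoot] at hz
  · have hPne : P ≠ 0 := by
      intro h
      apply hg0
      rw [hg, h, map_zero, zero_div]
    have hcross : P * g.denom = g.num * D := by
      apply RatFunc.algebraMap_injective ℝ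
      rw [_root_.map_mul, _root_.map_mul]
      have h1 : algebraMap ℝ[X] (RatFunc ℝ) P / algebraMap ℝ[X] (RatFunc ℝ) D =
          algebraMap ℝ[X] (RatFunc ℝ) g.num / algebraMap ℝ[X] (RatFunc ℝ) g.denom := by
        rw [RatFunc.num_div_denom, hg]
      rw [div_eq_div_iff (RatFunc.algebraMap_ne_zero hDne)
        (RatFunc.algebraMap_ne_zero g.denom_ne_zero)] at h1
      linear_combination h1
    constructor
    · have hnum : g.num ≠ 0 := RatFunc.num_ne_zero hg0
      have hdd : P.natDegree + g.denom.natDegree = g.num.natDegree + M := by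
        rw [← natDegree_mul hPne g.denom_ne_zero, hcross, natDegree_mul hnum hDne, hDdeg]
      rw [RatFunc.IsProperR]
      omega
    · have hdvd : g.denom ∣ D := by
        have h1 : g.denom ∣ g.num * D := ⟨P, by linear_combination -hcross⟩
        exact (RatFunc.isCoprime_num_denom g).symm.dvd_of_dvd_mul_left h1
      intro z hz
      obtain ⟨e, he⟩ := hdvd
      have hzD : ((X + C 1 : ℝ[X]) ^ M).map (algebraMap ℝ ℂ) |>.IsRoot z := by
        rw [← hD, he, Polynomial.map_mul]
        rw [Polynomial.IsRoot, eval_mul, hz, zero_mul]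
      have : (z + 1) ^ M = 0 := by
        simpa [Polynomial.IsRoot] using hzD
      have hz1 : z + 1 = 0 := by
        by_contra h
        exact pow_ne_zero M h this
      have : z = -1 := by linear_combination hz1
      rw [this]
      norm_num

/-- There is a common nonzero scalar making finitely many rational functions
simultaneously proper and stable. -/
lemma exists_common_scalar {ι : Type*} [Fintype ι] (F : ι → RatFunc ℝ) :
    ∃ s : RatFunc ℝ, s ≠ 0 ∧ ∀ i, (s * F i).IsProperR ∧ (s * F i).IsStableR := by
  classical
  set d : ℝ[X] := ∏ i, (F i).denom with hd
  have hdne : d ≠ 0 := Finset.prod_ne_zero_iff.mpr fun i _ => (F i).denom_ne_zero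
  have hdvd : ∀ i, ∃ e : ℝ[X], d = (F i).denom * e := fun i =>
    (Finset.dvd_prod_of_mem _ (Finset.mem_univ i))
  choose e he using hdvd
  set P : ι → ℝ[X] := fun i => (F i).num * e i with hP
  set M : ℕ := Finset.univ.sup fun i => (P i).natDegree with hM
  set s : RatFunc ℝ := algebraMap ℝ[X] (RatFunc ℝ) d /
      algebraMap ℝ[X] (RatFunc ℝ) ((X + C 1) ^ M) with hs
  have hDne : ((X + C 1 : ℝ[X]) ^ M) ≠ 0 := pow_ne_zero _ (X_add_C_ne_zero 1)
  refine ⟨s, div_ne_zero (RatFunc.algebraMap_ne_zero hdne)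
    (RatFunc.algebraMap_ne_zero hDne), fun i => ?_⟩
  have key : algebraMap ℝ[X] (RatFunc ℝ) d * F i = algebraMap ℝ[X] (RatFunc ℝ) (P i) := by
    have h0 : (algebraMap ℝ[X] (RatFunc ℝ)) (F i).denom ≠ 0 :=
      RatFunc.algebraMap_ne_zero (F i).denom_ne_zero
    have hnum : algebraMap ℝ[X] (RatFunc ℝ) (F i).num = F i *
        algebraMap ℝ[X] (RatFunc ℝ) (F i).denom :=
      (div_eq_iff h0).mp (RatFunc.num_div_denom (F i))
    rw [he i, hP, _root_.map_mul, _root_.map_mul, hnum]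
    ring
  have hsF : s * F i = algebraMap ℝ[X] (RatFunc ℝ) (P i) /
      algebraMap ℝ[X] (RatFunc ℝ) ((X + C 1) ^ M) := by
    rw [hs, div_mul_eq_mul_div, key]
  rw [hsF]
  exact proper_stable_aux (P i) M
    (Finset.le_sup (f := fun i => (P i).natDegree) (Finset.mem_univ i))

/-- Over a field, a vector `w` is outside the column span of `Gd` iff some left
annihilator of `Gd` does not annihilate `w`. -/
lemma key_lin {K : Type*} [Field K] {p md : ℕ} (Gd : Matrix (Fin p) (Fin md) K)
    (w : Fin p → K) :
    (∃ v : Fin p → K, Matrix.vecMul v Gd = 0 ∧ dotProduct v w ≠ 0) ↔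
      w ∉ Submodule.span K (Set.range Gdᵀ) := by
  constructor
  · rintro ⟨v, hv, hvw⟩ hmem
    apply hvw
    clear hvw
    induction hmem using Submodule.span_induction with
    | mem x hx =>
      obtain ⟨k, rfl⟩ := hx
      have := congrFun hv k
      simpa [Matrix.vecMul, dotProduct, Matrix.transpose_apply] using this
    | zero => simp
    | add x y _ _ hx hy => simp [dotProduct_add, hx, hy]
    | smul c x _ hx => simp [dotProduct_smul, hx]
  · intro h
    set W := Submodule.span K (Set.range Gdᵀ) with hW
    have hw0 : W.mkQ w ≠ 0 := by
      simpa [Submodule.Quotient.mk_eq_zero] using h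
    have : ¬ ∀ φ : Module.Dual K ((Fin p → K) ⧸ W), φ (W.mkQ w) = 0 := by
      rw [Module.forall_dual_apply_eq_zero_iff]
      exact hw0
    push_neg at this
    obtain ⟨φ, hφ⟩ := this
    set ψ : (Fin p → K) →ₗ[K] K := φ.comp W.mkQ with hψdef
    set v : Fin p → K := fun i => ψ (Pi.single i (1 : K)) with hv
    have hψ : ∀ x : Fin p → K, ψ x = dotProduct v x := by
      intro x
      have hx : x = ∑ i, x i • (Pi.single i (1 : K) : Fin p → K) := by
        funext j
        simp [Pi.single_apply, Finset.sum_apply]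
      conv_lhs => rw [hx]
      rw [map_sum]
      simp only [_root_.map_smul, smul_eq_mul]
      rw [dotProduct]
      exact Finset.sum_congr rfl fun i _ => by rw [hv]; ring
    have hker : ∀ x ∈ W, ψ x = 0 := by
      intro x hx
      rw [hψdef]
      simp only [LinearMap.comp_apply, Submodule.mkQ_apply]
      rw [(Submodule.Quotient.mk_eq_zero W).mpr hx, map_zero]
    refine ⟨v, ?_, ?_⟩
    · funext k
      have : ψ (Gdᵀ k) = 0 := hker _ (Submodule.subset_span ⟨k, rfl⟩)
      rw [hψ] at this
      simpa [Matrix.vecMul, dotProduct, Matrix.transpose_apply] using this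
    · rw [← hψ]
      exact hφ

/-- Appending one column strictly increases the rank iff that column is outside
the column span. -/
lemma rank_lt_iff {K : Type*} [Field K] {p md : ℕ} (Gd : Matrix (Fin p) (Fin md) K)
    (c : Matrix (Fin p) (Fin 1) K) :
    Gd.rank < (Matrix.fromCols Gd c).rank ↔
      (fun i => c i 0) ∉ Submodule.span K (Set.range Gdᵀ) := by
  set w : Fin p → K := fun i => c i 0 with hw
  have hrange : Set.range (Matrix.fromCols Gd c)ᵀ = Set.range Gdᵀ ∪ {w} := by
    rw [Matrix.transpose_fromCols]
    ext x
    constructor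
    · rintro ⟨k | k, rfl⟩
      · exact Or.inl ⟨k, rfl⟩
      · right
        have hk : k = 0 := Subsingleton.elim _ _
        subst hk
        rfl
    · rintro (⟨k, rfl⟩ | hx)
      · exact ⟨Sum.inl k, rfl⟩
      · exact ⟨Sum.inr 0, by rw [hx]; rfl⟩
  rw [Matrix.rank_eq_finrank_span_cols, Matrix.rank_eq_finrank_span_cols,
    show Gd.col = Gdᵀ from rfl, show (Matrix.fromCols Gd c).col = (Matrix.fromCols Gd c)ᵀ from rfl, hrange,
    Submodule.span_union]
  set W := Submodule.span K (Set.range Gdᵀ) with hW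
  constructor
  · intro hlt hmem
    have : W ⊔ Submodule.span K {w} = W := by
      rw [sup_eq_left, Submodule.span_le, Set.singleton_subset_iff]
      exact hmem
    rw [this] at hlt
    exact lt_irrefl _ hlt
  · intro hmem
    have hlt : W < W ⊔ Submodule.span K {w} := by
      refine lt_of_le_of_ne le_sup_left fun heq => hmem ?_
      have : w ∈ W ⊔ Submodule.span K {w} :=
        Submodule.mem_sup_right (Submodule.mem_span_singleton_self w)
      rwa [← heq] at this
    exact Submodule.finrank_lt_finrank_of_lt hlt

/-- **Fault detectability characterization** (Proposition: the `j`-th fault is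
detectable iff `rank [G_d  G_{f_j}] > rank G_d`). -/
theorem fault_detectable_iff_rank
    (p mu md mf : ℕ)
    (Gu : Matrix (Fin p) (Fin mu) (RatFunc ℝ))
    (Gd : Matrix (Fin p) (Fin md) (RatFunc ℝ))
    (Gf : Matrix (Fin p) (Fin mf) (RatFunc ℝ)) (j : Fin mf) :
    (∃ (q : ℕ) (Q : Matrix (Fin q) (Fin p ⊕ Fin mu) (RatFunc ℝ)),
        Q.IsProperR ∧ Q.IsStableR ∧
        Q * Matrix.fromRows Gu (1 : Matrix (Fin mu) (Fin mu) (RatFunc ℝ)) = 0 ∧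
        Q * Matrix.fromRows Gd (0 : Matrix (Fin mu) (Fin md) (RatFunc ℝ)) = 0 ∧
        Q * Matrix.fromRows (colMat Gf j) (0 : Matrix (Fin mu) (Fin 1) (RatFunc ℝ)) ≠ 0) ↔
      Gd.rank < (Matrix.fromCols Gd (colMat Gf j)).rank := by
  classical
  rw [rank_lt_iff Gd (colMat Gf j), ← key_lin Gd]
  set w : Fin p → RatFunc ℝ := fun i => colMat Gf j i 0 with hwdef
  constructor
  · rintro ⟨q, Q, _, _, hQu, hQd, hQc⟩
    have hex : ∃ r k, (Q * Matrix.fromRows (colMat Gf j)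
        (0 : Matrix (Fin mu) (Fin 1) (RatFunc ℝ))) r k ≠ 0 := by
      by_contra h
      push_neg at h
      exact hQc (by ext r k; simpa using h r k)
    obtain ⟨r, k, hrk⟩ := hex
    refine ⟨fun i => Q r (Sum.inl i), ?_, ?_⟩
    · funext k'
      have h0 := congrFun (congrFun hQd r) k'
      rw [Matrix.mul_apply, Fintype.sum_sum_type] at h0
      simp only [Matrix.fromRows_apply_inl, Matrix.fromRows_apply_inr, Matrix.zero_apply,
        mul_zero, Finset.sum_const_zero, add_zero] at h0
      simpa [Matrix.vecMul, dotProduct] using h0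
    · have hk : k = 0 := Subsingleton.elim _ _
      subst hk
      rw [Matrix.mul_apply, Fintype.sum_sum_type] at hrk
      simp only [Matrix.fromRows_apply_inl, Matrix.fromRows_apply_inr, Matrix.zero_apply,
        mul_zero, Finset.sum_const_zero, add_zero] at hrk
      simpa [dotProduct, hwdef] using hrk
  · rintro ⟨v, hv, hw⟩
    have hv' : ∀ k, ∑ i, v i * Gd i k = 0 := fun k => by
      simpa [Matrix.vecMul, dotProduct] using congrFun hv k
    have hw' : ∑ i, v i * w i ≠ 0 := by
      simpa [dotProduct] using hw
    set F : Fin p ⊕ Fin mu → RatFunc ℝ :=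
      Sum.elim v (fun m => -(∑ i, v i * Gu i m)) with hF
    obtain ⟨s, hs0, hs⟩ := exists_common_scalar F
    refine ⟨1, Matrix.of fun _ x => s * F x, fun r x => (hs x).1, fun r x => (hs x).2,
      ?_, ?_, ?_⟩
    · ext r k
      rw [Matrix.mul_apply, Fintype.sum_sum_type]
      simp only [Matrix.of_apply, hF, Sum.elim_inl, Sum.elim_inr,
        Matrix.fromRows_apply_inl, Matrix.fromRows_apply_inr, Matrix.one_apply,
        mul_ite, mul_one, mul_zero, Finset.sum_ite_eq', Finset.mem_univ, if_true,
        Matrix.zero_apply]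
      rw [mul_neg, ← sub_eq_add_neg, sub_eq_zero, Finset.mul_sum]
      exact Finset.sum_congr rfl fun i _ => (mul_assoc _ _ _)
    · ext r k
      rw [Matrix.mul_apply, Fintype.sum_sum_type]
      simp only [Matrix.of_apply, hF, Sum.elim_inl,
        Matrix.fromRows_apply_inl, Matrix.fromRows_apply_inr, Matrix.zero_apply,
        mul_zero, Finset.sum_const_zero, add_zero]
      calc ∑ i, s * v i * Gd i k = s * ∑ i, v i * Gd i k := by
            rw [Finset.mul_sum]; exact Finset.sum_congr rfl fun i _ => (mul_assoc _ _ _)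
        _ = 0 := by rw [hv' k, mul_zero]
    · intro heq
      have h0 := congrFun (congrFun heq 0) 0
      rw [Matrix.mul_apply, Fintype.sum_sum_type] at h0
      simp only [Matrix.of_apply, hF, Sum.elim_inl,
        Matrix.fromRows_apply_inl, Matrix.fromRows_apply_inr, Matrix.zero_apply,
        mul_zero, Finset.sum_const_zero, add_zero] at h0
      apply mul_ne_zero hs0 hw'
      rw [Finset.mul_sum]
      rw [← h0]
      exact Finset.sum_congr rfl fun i _ => (mul_assoc _ _ _).symm

end
end

section
/- The system y = G_u u + G_d d + G_f f (w ≡ 0) is completely fault detectable if and only if for every j = 1, …, m_f, rank [G_d(λ) G_{f_j}(λ)] > rank G_d(λ) (normal ranks over rational functions). -/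
/-!
Statement 1: The system y = G_u u + G_d d + G_f f (w ≡ 0) is completely fault
detectable (one proper stable filter Q decoupling u and d whose residual is
sensitive to every individual fault) if and only if for every j = 1, …, m_f,
rank [G_d(λ)  G_{f_j}(λ)] > rank G_d(λ) (normal ranks over rational functions).
-/

open Matrix Polynomial

noncomputable section

/-- If `f = P/Q` with `deg P ≤ deg Q` and all complex roots of `Q` in the open left
half plane, then `f` is proper and stable. -/
lemma proper_stable_of_div (P Q : ℝ[X]) (hQ : Q ≠ 0) (hdeg : P.natDegree ≤ Q.natDegree)
    (hroots : ∀ z : ℂ, (Q.map (algebraMap ℝ ℂ)).IsRoot z → z.re < 0) :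
    (algebraMap ℝ[X] (RatFunc ℝ) P / algebraMap ℝ[X] (RatFunc ℝ) Q).IsProperR ∧
    (algebraMap ℝ[X] (RatFunc ℝ) P / algebraMap ℝ[X] (RatFunc ℝ) Q).IsStableR := by
  set f := algebraMap ℝ[X] (RatFunc ℝ) P / algebraMap ℝ[X] (RatFunc ℝ) Q with hf
  have hdvd : f.denom ∣ Q := (RatFunc.denom_dvd hQ).mpr ⟨P, hf⟩
  constructor
  · by_cases h0 : f = 0
    · simp [RatFunc.IsProperR, h0]
    · have hP : P ≠ 0 := by
        intro h; apply h0; rw [hf, h]; simp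
      have key : f.num * Q = P * f.denom := by
        apply RatFunc.algebraMap_injective (K := ℝ)
        have h1 : algebraMap ℝ[X] (RatFunc ℝ) f.num / algebraMap ℝ[X] (RatFunc ℝ) f.denom
            = algebraMap ℝ[X] (RatFunc ℝ) P / algebraMap ℝ[X] (RatFunc ℝ) Q := by
          rw [RatFunc.num_div_denom]
        rw [div_eq_div_iff (RatFunc.algebraMap_ne_zero (RatFunc.denom_ne_zero f))
          (RatFunc.algebraMap_ne_zero hQ)] at h1
        simpa [_root_.map_mul] using h1
      have hnum : f.num ≠ 0 := RatFunc.num_ne_zero h0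
      have hd := congrArg Polynomial.natDegree key
      rw [Polynomial.natDegree_mul hnum hQ,
        Polynomial.natDegree_mul hP (RatFunc.denom_ne_zero f)] at hd
      unfold RatFunc.IsProperR
      omega
  · intro z hz
    apply hroots z
    obtain ⟨t, ht⟩ := hdvd
    have : Q.map (algebraMap ℝ ℂ) = f.denom.map (algebraMap ℝ ℂ) * t.map (algebraMap ℝ ℂ) := by
      rw [← Polynomial.map_mul, ← ht]
    rw [Polynomial.IsRoot, this, Polynomial.eval_mul, hz, zero_mul]

/-- Any finite family of rational functions can be simultaneously scaled by a single
nonzero rational function so that all products are proper and stable. -/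
lemma exists_scaling {ι : Type*} [Fintype ι] (r : ι → RatFunc ℝ) :
    ∃ α : RatFunc ℝ, α ≠ 0 ∧ ∀ i, (α * r i).IsProperR ∧ (α * r i).IsStableR := by
  classical
  set N := ∑ i, ((r i).num.natDegree + (r i).denom.natDegree) with hN
  set Q : ℝ[X] := (X + C 1) ^ N with hQdef
  have hQ : Q ≠ 0 := pow_ne_zero _ (X_add_C_ne_zero 1)
  have hQdeg : Q.natDegree = N := by
    rw [hQdef, natDegree_pow, natDegree_X_add_C, mul_one]
  have hQroots : ∀ z : ℂ, (Q.map (algebraMap ℝ ℂ)).IsRoot z → z.re < 0 := by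
    intro z hz
    rw [hQdef, Polynomial.IsRoot] at hz
    simp only [Polynomial.map_pow, Polynomial.map_add, Polynomial.map_X, Polynomial.map_C,
      eval_pow, eval_add, eval_X, eval_C] at hz
    have h := (pow_eq_zero_iff'.mp hz).1
    rw [RingHom.map_one] at h
    have : z = -1 := eq_neg_of_add_eq_zero_left h
    simp [this]
  refine ⟨algebraMap ℝ[X] (RatFunc ℝ) (∏ i, (r i).denom) / algebraMap ℝ[X] (RatFunc ℝ) Q,
    div_ne_zero (RatFunc.algebraMap_ne_zero (Finset.prod_ne_zero_iff.mpr
      fun i _ => RatFunc.denom_ne_zero (r i))) (RatFunc.algebraMap_ne_zero hQ), fun i => ?_⟩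
  by_cases h0 : r i = 0
  · rw [h0, mul_zero]
    constructor
    · simp [RatFunc.IsProperR]
    · intro z hz
      simp [RatFunc.IsStableR, Polynomial.IsRoot] at hz
  · have hn : (r i).num ≠ 0 := RatFunc.num_ne_zero h0
    obtain ⟨n, d, hn0, hd0, hri, hnd, hdd⟩ :
        ∃ n d : ℝ[X], n ≠ 0 ∧ d ≠ 0 ∧
          r i = algebraMap ℝ[X] (RatFunc ℝ) n / algebraMap ℝ[X] (RatFunc ℝ) d ∧
          n = (r i).num ∧ d = (r i).denom :=
      ⟨(r i).num, (r i).denom, hn, RatFunc.denom_ne_zero _,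
        (RatFunc.num_div_denom _).symm, rfl, rfl⟩
    set P : ℝ[X] := n * ∏ k ∈ Finset.univ.erase i, (r k).denom with hPdef
    have hprod : ∏ k, (r k).denom = d * ∏ k ∈ Finset.univ.erase i, (r k).denom := by
      rw [hdd]
      exact (Finset.mul_prod_erase Finset.univ _ (Finset.mem_univ i)).symm
    have h1 : algebraMap ℝ[X] (RatFunc ℝ) d ≠ 0 := RatFunc.algebraMap_ne_zero hd0
    have h2 : algebraMap ℝ[X] (RatFunc ℝ) Q ≠ 0 := RatFunc.algebraMap_ne_zero hQ
    have heq : algebraMap ℝ[X] (RatFunc ℝ) (∏ k, (r k).denom) / algebraMap ℝ[X] (RatFunc ℝ) Q * r i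
        = algebraMap ℝ[X] (RatFunc ℝ) P / algebraMap ℝ[X] (RatFunc ℝ) Q := by
      rw [hprod, hPdef, _root_.map_mul, _root_.map_mul, hri, div_mul_div_comm,
        div_eq_div_iff (mul_ne_zero h2 h1) h2]
      ring
    rw [heq]
    apply proper_stable_of_div _ _ hQ _ hQroots
    have herase : ∏ k ∈ Finset.univ.erase i, (r k).denom ≠ 0 :=
      Finset.prod_ne_zero_iff.mpr fun k _ => RatFunc.denom_ne_zero (r k)
    rw [hQdeg, hPdef, Polynomial.natDegree_mul hn0 herase, Polynomial.natDegree_prod _ _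
      fun k _ => RatFunc.denom_ne_zero (r k), hN, hnd]
    have h1 : (r i).num.natDegree ≤ ∑ k, (r k).num.natDegree :=
      Finset.single_le_sum (f := fun k => (r k).num.natDegree)
        (fun k _ => Nat.zero_le _) (Finset.mem_univ i)
    have h2 : ∑ k ∈ Finset.univ.erase i, (r k).denom.natDegree ≤ ∑ k, (r k).denom.natDegree :=
      Finset.sum_le_sum_of_subset (Finset.erase_subset _ _)
    rw [Finset.sum_add_distrib]
    omega

section LinAlg

variable {F : Type*} [Field F]

/-- A vector is outside the column span of a matrix iff some left annihilator of the
matrix does not annihilate the vector. -/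
lemma nmem_span_cols_iff {n p : ℕ} (A : Matrix (Fin p) (Fin n) F) (c : Fin p → F) :
    c ∉ Submodule.span F (Set.range Aᵀ) ↔
    ∃ v : Fin p → F, (∀ k, ∑ i, v i * A i k = 0) ∧ ∑ i, v i * c i ≠ 0 := by
  constructor
  · intro hc
    obtain ⟨φ, hφc, hφmap⟩ := Submodule.exists_dual_map_eq_bot_of_notMem hc inferInstance
    refine ⟨fun i => φ (fun j => if i = j then 1 else 0), fun k => ?_, ?_⟩
    · have hmem : Aᵀ k ∈ Submodule.span F (Set.range Aᵀ) :=
        Submodule.subset_span ⟨k, rfl⟩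
      have : φ (Aᵀ k) = 0 := by
        have : φ (Aᵀ k) ∈ Submodule.map φ (Submodule.span F (Set.range Aᵀ)) :=
          Submodule.mem_map_of_mem hmem
        rw [hφmap] at this
        simpa using this
      rw [LinearMap.pi_apply_eq_sum_univ φ (Aᵀ k)] at this
      simpa [transpose_apply, mul_comm, smul_eq_mul] using this
    · rw [LinearMap.pi_apply_eq_sum_univ φ c] at hφc
      simpa [mul_comm, smul_eq_mul] using hφc
  · rintro ⟨v, hvA, hvc⟩ hc
    let φ : (Fin p → F) →ₗ[F] F :=
      { toFun := fun x => ∑ i, v i * x i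
        map_add' := by
          intro x y
          simp [mul_add, Finset.sum_add_distrib]
        map_smul' := by
          intro a x
          simp [Finset.mul_sum, smul_eq_mul]
          congr 1
          funext i
          ring }
    have hspan : Submodule.span F (Set.range Aᵀ) ≤ LinearMap.ker φ := by
      rw [Submodule.span_le]
      rintro _ ⟨k, rfl⟩
      simpa [φ, LinearMap.mem_ker] using hvA k
    exact hvc (hspan hc)

/-- Appending one column strictly increases the rank iff the new column is outside the
column span. -/
lemma rank_lt_fromColumns_iff {p n : ℕ} (A : Matrix (Fin p) (Fin n) F)
    (c : Matrix (Fin p) (Fin 1) F) :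
    A.rank < (fromCols A c).rank ↔
      (fun i => c i 0) ∉ Submodule.span F (Set.range Aᵀ) := by
  have hrange : Set.range (fromCols A c)ᵀ =
      Set.range Aᵀ ∪ {fun i => c i 0} := by
    erw [Sum.range_eq]
    have h1 : Set.range ((fromCols A c)ᵀ ∘ Sum.inl) = Set.range Aᵀ := rfl
    have h2 : Set.range ((fromCols A c)ᵀ ∘ Sum.inr) = {fun i => c i 0} := by
      ext x
      constructor
      · rintro ⟨k, rfl⟩
        have hk : k = 0 := Subsingleton.elim _ _
        subst hk
        rfl
      · rintro rfl
        exact ⟨0, rfl⟩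
    rw [h1, h2]
  rw [Matrix.rank_eq_finrank_span_cols, Matrix.rank_eq_finrank_span_cols]
  change Module.finrank F (Submodule.span F (Set.range Aᵀ)) <
      Module.finrank F (Submodule.span F (Set.range (fromCols A c)ᵀ)) ↔ _
  rw [hrange,
    Submodule.span_union]
  constructor
  · intro h hc
    have : Submodule.span F (Set.range Aᵀ) ⊔ Submodule.span F {fun i => c i 0}
        = Submodule.span F (Set.range Aᵀ) := by
      rw [sup_eq_left, Submodule.span_le, Set.singleton_subset_iff]
      exact hc
    rw [this] at h
    exact lt_irrefl _ h
  · intro hc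
    apply Submodule.finrank_lt_finrank_of_lt
    rw [lt_iff_le_and_ne]
    refine ⟨le_sup_left, fun h => hc ?_⟩
    rw [h]
    exact Submodule.mem_sup_right (Submodule.mem_span_singleton_self _)

/-- Pulling a scalar out of a dot-product-style sum. -/
lemma sum_scal_mul {ι : Type*} [Fintype ι] (a : F) (f g : ι → F) :
    ∑ i, (a * f i) * g i = a * ∑ i, f i * g i := by
  rw [Finset.mul_sum]
  exact Finset.sum_congr rfl fun i _ => by ring

end LinAlg

/-- **Complete fault detectability characterization**. -/
theorem completely_fault_detectable_iff_rank
    (p mu md mf : ℕ)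
    (Gu : Matrix (Fin p) (Fin mu) (RatFunc ℝ))
    (Gd : Matrix (Fin p) (Fin md) (RatFunc ℝ))
    (Gf : Matrix (Fin p) (Fin mf) (RatFunc ℝ)) :
    (∃ (q : ℕ) (Q : Matrix (Fin q) (Fin p ⊕ Fin mu) (RatFunc ℝ)),
        Q.IsProperR ∧ Q.IsStableR ∧
        Q * Matrix.fromRows Gu (1 : Matrix (Fin mu) (Fin mu) (RatFunc ℝ)) = 0 ∧
        Q * Matrix.fromRows Gd (0 : Matrix (Fin mu) (Fin md) (RatFunc ℝ)) = 0 ∧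
        ∀ j : Fin mf,
          Q * Matrix.fromRows (colMat Gf j) (0 : Matrix (Fin mu) (Fin 1) (RatFunc ℝ)) ≠ 0) ↔
      ∀ j : Fin mf, Gd.rank < (Matrix.fromCols Gd (colMat Gf j)).rank := by
  constructor
  · rintro ⟨q, Q, -, -, -, hQd, hQf⟩ j
    rw [rank_lt_fromColumns_iff, nmem_span_cols_iff]
    obtain ⟨r, c0, hr⟩ : ∃ r c0,
        (Q * Matrix.fromRows (colMat Gf j) (0 : Matrix (Fin mu) (Fin 1) (RatFunc ℝ))) r c0 ≠ 0 := by
      by_contra h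
      push_neg at h
      exact hQf j (by ext r c0; simpa using h r c0)
    refine ⟨fun i => Q r (Sum.inl i), fun k => ?_, ?_⟩
    · have h0 : (Q * Matrix.fromRows Gd (0 : Matrix (Fin mu) (Fin md) (RatFunc ℝ))) r k = 0 := by
        rw [hQd]; rfl
      rw [mul_apply, Fintype.sum_sum_type] at h0
      simpa using h0
    · rw [mul_apply, Fintype.sum_sum_type] at hr
      simpa [colMat] using hr
  · intro h
    have key : ∀ j, ∃ v : Fin p → RatFunc ℝ,
        (∀ k, ∑ i, v i * Gd i k = 0) ∧ ∑ i, v i * Gf i j ≠ 0 := by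
      intro j
      have h1 := (rank_lt_fromColumns_iff Gd (colMat Gf j)).mp (h j)
      rw [nmem_span_cols_iff] at h1
      simpa [colMat] using h1
    choose v hvd hvf using key
    have scale : ∀ j : Fin mf, ∃ α : RatFunc ℝ, α ≠ 0 ∧ ∀ x : Fin p ⊕ Fin mu,
        ((α * Sum.elim (v j) (fun k => -∑ i, v j i * Gu i k) x).IsProperR ∧
         (α * Sum.elim (v j) (fun k => -∑ i, v j i * Gu i k) x).IsStableR) :=
      fun j => exists_scaling _
    choose α hα hps using scale
    set Q1 : Matrix (Fin mf) (Fin p) (RatFunc ℝ) :=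
      Matrix.of fun j i => α j * v j i with hQ1
    set Q2 : Matrix (Fin mf) (Fin mu) (RatFunc ℝ) :=
      Matrix.of fun j k => α j * -∑ i, v j i * Gu i k with hQ2
    have hQ1mul : ∀ {n : ℕ} (B : Matrix (Fin p) (Fin n) (RatFunc ℝ)) (j : Fin mf) (k : Fin n),
        (Q1 * B) j k = α j * ∑ i, v j i * B i k := by
      intro n B j k
      rw [mul_apply]
      exact sum_scal_mul _ _ _
    refine ⟨mf, Matrix.fromCols Q1 Q2, ?_, ?_, ?_, ?_, ?_⟩
    · rintro j (i | k)
      · exact (hps j (Sum.inl i)).1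
      · exact (hps j (Sum.inr k)).1
    · rintro j (i | k)
      · exact (hps j (Sum.inl i)).2
      · exact (hps j (Sum.inr k)).2
    · rw [fromCols_mul_fromRows, Matrix.mul_one]
      ext j k
      rw [Matrix.add_apply, hQ1mul, Matrix.zero_apply]
      simp only [hQ2, Matrix.of_apply]
      ring
    · rw [fromCols_mul_fromRows, Matrix.mul_zero, add_zero]
      ext j k
      rw [hQ1mul, hvd j k, mul_zero, Matrix.zero_apply]
    · intro j hzero
      rw [fromCols_mul_fromRows, Matrix.mul_zero, add_zero] at hzero
      have hent : (Q1 * colMat Gf j) j 0 = 0 := by rw [hzero]; rfl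
      rw [hQ1mul] at hent
      have : ∑ i, v j i * (colMat Gf j) i 0 = ∑ i, v j i * Gf i j := rfl
      rw [this] at hent
      rcases mul_eq_zero.mp hent with h' | h'
      · exact hα j h'
      · exact hvf j h'

end
end

section
/- For a given n_b × m_f structure matrix S, the system y = G_u u + G_d d + G_f f is S-fault isolable if and only if for every i = 1, …, n_b and every j with S_{ij} ≠ 0, rank [G_d(λ) Ĝ_d^{(i)}(λ) G_{f_j}(λ)] > rank [G_d(λ) Ĝ_d^{(i)}(λ)], where Ĝ_d^{(i)}(λ) is formed from the columns G_{f_k}(λ) of G_f(λ) with S_{ik} = 0. -/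
/-!
Statement 4: For a given n_b × m_f structure matrix S, the system
y = G_u u + G_d d + G_f f is S-fault isolable (there is a bank of n_b proper
stable filters, decoupling u and d, whose block fault-to-residual structure
matrix equals S) if and only if for every i and every j with S_{ij} ≠ 0,
rank [G_d  Ĝ_d^{(i)}  G_{f_j}] > rank [G_d  Ĝ_d^{(i)}], where Ĝ_d^{(i)} collects
the columns G_{f_k} of G_f with S_{ik} = 0.  Ranks are normal ranks over R(λ).
-/

open Matrix Polynomial

noncomputable section

/-- `Ĝ_d^{(i)}`: the columns `G_{f_k}` of `G_f` with `S i k = false`. -/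
def hatGd {p nb mf : ℕ} (S : Fin nb → Fin mf → Bool)
    (Gf : Matrix (Fin p) (Fin mf) (RatFunc ℝ)) (i : Fin nb) :
    Matrix (Fin p) {k : Fin mf // S i k = false} (RatFunc ℝ) :=
  Matrix.of fun r k => Gf r k.val

lemma aux_X1_ne : (X + 1 : ℝ[X]) ≠ 0 := by
  have := Polynomial.monic_X_add_C (1 : ℝ)
  simpa using this.ne_zero

lemma aux_X1_deg : (X + 1 : ℝ[X]).natDegree = 1 := by
  have := Polynomial.natDegree_X_add_C (1 : ℝ)
  simpa using this

lemma aux_ps (q : ℝ[X]) (N : ℕ) (hq : q.natDegree ≤ N)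
    (g : RatFunc ℝ)
    (hg : g = algebraMap ℝ[X] (RatFunc ℝ) q / algebraMap ℝ[X] (RatFunc ℝ) ((X + 1) ^ N)) :
    g.IsProperR ∧ g.IsStableR := by
  have hd0 : ((X + 1 : ℝ[X]) ^ N) ≠ 0 := pow_ne_zero _ aux_X1_ne
  have hdvd : g.denom ∣ (X + 1) ^ N := (RatFunc.denom_dvd hd0).mpr ⟨q, hg⟩
  constructor
  · by_cases hq0 : q = 0
    · subst hq0
      simp only [map_zero, zero_div] at hg
      subst hg
      simp [RatFunc.IsProperR]
    · have hgne : g ≠ 0 := by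
        rw [hg]
        exact div_ne_zero (RatFunc.algebraMap_ne_zero hq0) (RatFunc.algebraMap_ne_zero hd0)
      have key : g.num * (X + 1) ^ N = q * g.denom := by
        have h1 : algebraMap ℝ[X] (RatFunc ℝ) g.num / algebraMap ℝ[X] (RatFunc ℝ) g.denom
            = algebraMap ℝ[X] (RatFunc ℝ) q / algebraMap ℝ[X] (RatFunc ℝ) ((X + 1) ^ N) := by
          rw [RatFunc.num_div_denom, hg]
        have h2 := (div_eq_div_iff (RatFunc.algebraMap_ne_zero g.denom_ne_zero)
          (RatFunc.algebraMap_ne_zero hd0)).mp h1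
        rw [← _root_.map_mul, ← _root_.map_mul] at h2
        exact IsFractionRing.injective ℝ[X] (RatFunc ℝ) h2
      have hnum0 : g.num ≠ 0 := RatFunc.num_ne_zero hgne
      have hdeg : g.num.natDegree + ((X + 1 : ℝ[X]) ^ N).natDegree
          = q.natDegree + g.denom.natDegree := by
        rw [← Polynomial.natDegree_mul hnum0 hd0, key,
          Polynomial.natDegree_mul hq0 g.denom_ne_zero]
      rw [Polynomial.natDegree_pow, aux_X1_deg, mul_one] at hdeg
      unfold RatFunc.IsProperR
      omega
  · intro z hz
    obtain ⟨c, hc⟩ := hdvd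
    have hc' := congrArg (Polynomial.map (algebraMap ℝ ℂ)) hc
    rw [Polynomial.map_mul] at hc'
    have hz2 : (((X + 1 : ℝ[X]) ^ N).map (algebraMap ℝ ℂ)).IsRoot z := by
      rw [hc']
      simp only [Polynomial.IsRoot, Polynomial.eval_mul] at hz ⊢
      rw [hz, zero_mul]
    have hz3 : (z + 1) ^ N = 0 := by
      simpa [Polynomial.IsRoot] using hz2
    have : z + 1 = 0 := (pow_eq_zero_iff'.mp hz3).1
    have : z = -1 := by linear_combination this
    rw [this]
    norm_num

lemma exists_scale {ι : Type*} [Fintype ι] (f : ι → RatFunc ℝ) :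
    ∃ α : RatFunc ℝ, α ≠ 0 ∧ ∀ t, (α * f t).IsProperR ∧ (α * f t).IsStableR := by
  classical
  set C : ℝ[X] := ∏ t, (f t).denom with hCdef
  have hC0 : C ≠ 0 := Finset.prod_ne_zero_iff.mpr fun t _ => (f t).denom_ne_zero
  set N : ℕ := C.natDegree + ∑ t, (f t).num.natDegree with hNdef
  have hD0 : ((X + 1 : ℝ[X]) ^ N) ≠ 0 := pow_ne_zero _ aux_X1_ne
  refine ⟨algebraMap ℝ[X] (RatFunc ℝ) C / algebraMap ℝ[X] (RatFunc ℝ) ((X + 1) ^ N),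
    div_ne_zero (RatFunc.algebraMap_ne_zero hC0) (RatFunc.algebraMap_ne_zero hD0), fun t => ?_⟩
  set rest : ℝ[X] := ∏ s ∈ Finset.univ.erase t, (f s).denom with hrest
  have hC : C = (f t).denom * rest := (Finset.mul_prod_erase _ _ (Finset.mem_univ t)).symm
  have heq : algebraMap ℝ[X] (RatFunc ℝ) C / algebraMap ℝ[X] (RatFunc ℝ) ((X + 1) ^ N) * f t
      = algebraMap ℝ[X] (RatFunc ℝ) ((f t).num * rest)
        / algebraMap ℝ[X] (RatFunc ℝ) ((X + 1) ^ N) := by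
    have h1 := RatFunc.algebraMap_ne_zero (f t).denom_ne_zero
    have h2 := RatFunc.algebraMap_ne_zero hD0
    have hn : algebraMap ℝ[X] (RatFunc ℝ) (f t).num
        = f t * algebraMap ℝ[X] (RatFunc ℝ) (f t).denom :=
      (div_eq_iff h1).mp (RatFunc.num_div_denom (f t))
    rw [hC, _root_.map_mul, _root_.map_mul, hn]
    field_simp
  have hdeg : ((f t).num * rest).natDegree ≤ N := by
    refine (Polynomial.natDegree_mul_le).trans ?_
    have h1 : rest.natDegree ≤ C.natDegree :=
      Polynomial.natDegree_le_of_dvd ⟨(f t).denom, by rw [hC]; ring⟩ hC0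
    have h2 : (f t).num.natDegree ≤ ∑ s, (f s).num.natDegree :=
      Finset.single_le_sum (f := fun s => (f s).num.natDegree)
        (fun _ _ => Nat.zero_le _) (Finset.mem_univ t)
    omega
  exact aux_ps _ N hdeg _ heq

section LinAlg
variable {F : Type*} [Field F] {P : Type*} [Fintype P] [DecidableEq P]

lemma range_fromColumns {n m : Type*} [Fintype n] [Fintype m]
    (A : Matrix P n F) (B : Matrix P m F) :
    LinearMap.range (Matrix.fromCols A B).mulVecLin
      = LinearMap.range A.mulVecLin ⊔ LinearMap.range B.mulVecLin := by
  apply le_antisymm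
  · rintro _ ⟨x, rfl⟩
    have hx : x = Sum.elim (x ∘ Sum.inl) (x ∘ Sum.inr) := by
      funext i; cases i <;> rfl
    rw [Matrix.mulVecLin_apply, hx, Matrix.fromCols_mulVec_sumElim]
    exact Submodule.add_mem_sup ⟨_, rfl⟩ ⟨_, rfl⟩
  · apply sup_le
    · rintro _ ⟨x, rfl⟩
      exact ⟨Sum.elim x 0, by simp⟩
    · rintro _ ⟨x, rfl⟩
      exact ⟨Sum.elim 0 x, by simp⟩

lemma range_colMat' (c : Matrix P (Fin 1) F) :
    LinearMap.range c.mulVecLin = Submodule.span F {fun i => c i 0} := by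
  apply le_antisymm
  · rintro _ ⟨x, rfl⟩
    have : c.mulVecLin x = x 0 • fun i => c i 0 := by
      funext i
      simp [Matrix.mulVecLin_apply, Matrix.mulVec, dotProduct, Fin.sum_univ_one, mul_comm]
    rw [this]
    exact Submodule.smul_mem _ _ (Submodule.mem_span_singleton_self _)
  · rw [Submodule.span_singleton_le_iff_mem]
    exact ⟨fun _ => 1, by funext i; simp [Matrix.mulVecLin_apply, Matrix.mulVec, dotProduct]⟩

lemma rank_lt_iff_s4 {n : Type*} [Fintype n]
    (M : Matrix P n F) (c : Matrix P (Fin 1) F) :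
    M.rank < (Matrix.fromCols M c).rank ↔
      (fun i => c i 0) ∉ LinearMap.range M.mulVecLin := by
  rw [Matrix.rank, Matrix.rank, range_fromColumns, range_colMat']
  constructor
  · intro h hc
    rw [sup_eq_left.mpr (Submodule.span_singleton_le_iff_mem _ _ |>.mpr hc)] at h
    exact lt_irrefl _ h
  · intro hc
    apply Submodule.finrank_lt_finrank_of_lt
    refine lt_of_le_of_ne le_sup_left ?_
    intro h
    exact hc (h ▸ Submodule.mem_sup_right (Submodule.mem_span_singleton_self _))

lemma nmem_range_iff_exists {n : Type*} [Fintype n] [DecidableEq n]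
    (M : Matrix P n F) (c : P → F) :
    c ∉ LinearMap.range M.mulVecLin ↔
      ∃ v : P → F, v ᵥ* M = 0 ∧ v ⬝ᵥ c ≠ 0 := by
  constructor
  · intro hc
    obtain ⟨φ, hφc, hφ⟩ := Submodule.exists_dual_map_eq_bot_of_notMem hc inferInstance
    set v : P → F := fun j => φ (Pi.single j 1) with hvdef
    have hv : ∀ w : P → F, v ⬝ᵥ w = φ w := by
      intro w
      have hw : w = ∑ i, w i • (Pi.single i 1 : P → F) := by
        funext j
        simp [Finset.sum_apply, Pi.single_apply]
      calc v ⬝ᵥ w = ∑ i, φ (Pi.single i 1) * w i := rfl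
        _ = φ (∑ i, w i • (Pi.single i 1 : P → F)) := by
            rw [map_sum]
            exact Finset.sum_congr rfl fun i _ => by rw [_root_.map_smul, smul_eq_mul, mul_comm]
        _ = φ w := by rw [← hw]
    refine ⟨v, ?_, ?_⟩
    · funext k
      have hcolmem : (fun i => M i k) ∈ LinearMap.range M.mulVecLin := by
        refine ⟨Pi.single k 1, ?_⟩
        funext i
        simp [Matrix.mulVecLin_apply, Matrix.mulVec_single]
      have h0 : φ (fun i => M i k) = 0 := by
        have := Submodule.mem_map_of_mem (f := φ) hcolmem
        rw [hφ] at this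
        simpa using this
      show v ⬝ᵥ (fun i => M i k) = 0
      rw [hv, h0]
    · rw [hv]
      exact hφc
  · rintro ⟨v, hvM, hvc⟩ ⟨x, rfl⟩
    apply hvc
    rw [Matrix.mulVecLin_apply, Matrix.dotProduct_mulVec, hvM, zero_dotProduct]
end LinAlg

/-- **Characterization of S-fault isolability**. -/
theorem S_fault_isolable_iff_rank
    (p mu md mf nb : ℕ)
    (Gu : Matrix (Fin p) (Fin mu) (RatFunc ℝ))
    (Gd : Matrix (Fin p) (Fin md) (RatFunc ℝ))
    (Gf : Matrix (Fin p) (Fin mf) (RatFunc ℝ))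
    (S : Fin nb → Fin mf → Bool) :
    (∃ (q : Fin nb → ℕ)
        (Q : ∀ i : Fin nb, Matrix (Fin (q i)) (Fin p ⊕ Fin mu) (RatFunc ℝ)),
        ∀ i : Fin nb,
          (Q i).IsProperR ∧ (Q i).IsStableR ∧
          Q i * Matrix.fromRows Gu (1 : Matrix (Fin mu) (Fin mu) (RatFunc ℝ)) = 0 ∧
          Q i * Matrix.fromRows Gd (0 : Matrix (Fin mu) (Fin md) (RatFunc ℝ)) = 0 ∧
          ∀ j : Fin mf,
            (Q i * Matrix.fromRows (colMat Gf j)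
                (0 : Matrix (Fin mu) (Fin 1) (RatFunc ℝ)) ≠ 0 ↔ S i j = true)) ↔
      ∀ i : Fin nb, ∀ j : Fin mf, S i j = true →
        (Matrix.fromCols Gd (hatGd S Gf i)).rank <
          (Matrix.fromCols (Matrix.fromCols Gd (hatGd S Gf i))
            (colMat Gf j)).rank := by
  classical
  constructor
  · rintro ⟨q, Q, hQ⟩ i j hij
    obtain ⟨_, _, hu, hd, hf⟩ := hQ i
    set Q1 : Matrix (Fin (q i)) (Fin p) (RatFunc ℝ) :=
      Matrix.of fun r c => Q i r (Sum.inl c) with hQ1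
    set Q2 : Matrix (Fin (q i)) (Fin mu) (RatFunc ℝ) :=
      Matrix.of fun r c => Q i r (Sum.inr c) with hQ2
    have hsplit : Q i = Matrix.fromCols Q1 Q2 := by
      ext r (c | c) <;> rfl
    rw [hsplit, Matrix.fromCols_mul_fromRows, Matrix.mul_zero, add_zero] at hd
    have hj : Q1 * colMat Gf j ≠ 0 := by
      have := (hf j).mpr hij
      rw [hsplit, Matrix.fromCols_mul_fromRows, Matrix.mul_zero, add_zero] at this
      exact this
    have hk0 : ∀ k : Fin mf, S i k = false → Q1 * colMat Gf k = 0 := by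
      intro k hk
      by_contra hne
      have := (hf k).mp (by
        rw [hsplit, Matrix.fromCols_mul_fromRows, Matrix.mul_zero, add_zero]
        exact hne)
      rw [hk] at this
      exact Bool.noConfusion this
    -- find a nonzero entry
    have hex : ∃ r, (Q1 * colMat Gf j) r 0 ≠ 0 := by
      by_contra hcon
      push_neg at hcon
      apply hj
      ext r c
      have hc : c = 0 := Subsingleton.elim _ _
      rw [hc]
      simpa using hcon r
    obtain ⟨r, hr⟩ := hex
    set v : Fin p → RatFunc ℝ := fun c => Q1 r c with hv
    rw [rank_lt_iff_s4]
    rw [nmem_range_iff_exists]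
    refine ⟨v, ?_, ?_⟩
    · rw [Matrix.vecMul_fromCols]
      have h1 : v ᵥ* Gd = 0 := by
        funext k
        have := congrFun (congrFun hd r) k
        simpa [Matrix.mul_apply, Matrix.vecMul, dotProduct] using this
      have h2 : v ᵥ* hatGd S Gf i = 0 := by
        funext k
        have := congrFun (congrFun (hk0 k.val k.prop) r) 0
        simpa [Matrix.mul_apply, Matrix.vecMul, dotProduct, colMat, hatGd] using this
      rw [h1, h2]
      ext (k | k) <;> rfl
    · show v ⬝ᵥ (fun t => colMat Gf j t 0) ≠ 0
      intro h0
      apply hr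
      rw [Matrix.mul_apply]
      simpa [dotProduct] using h0
  · intro h
    -- choose the annihilating/detecting vectors
    have main : ∀ i j, ∃ v : Fin p → RatFunc ℝ,
        v ᵥ* Gd = 0 ∧
        (∀ k : Fin mf, S i k = false → v ⬝ᵥ (fun r => Gf r k) = 0) ∧
        (S i j = true → v ⬝ᵥ (fun r => Gf r j) ≠ 0) := by
      intro i j
      by_cases hij : S i j = true
      · have hlt := h i j hij
        rw [rank_lt_iff_s4, nmem_range_iff_exists] at hlt
        obtain ⟨v, hvM, hvc⟩ := hlt
        rw [Matrix.vecMul_fromCols] at hvM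
        have hGd : v ᵥ* Gd = 0 := by
          funext k
          have := congrFun hvM (Sum.inl k)
          simpa using this
        have hhat : ∀ k : Fin mf, S i k = false → v ⬝ᵥ (fun r => Gf r k) = 0 := by
          intro k hk
          have := congrFun hvM (Sum.inr ⟨k, hk⟩)
          simpa [Matrix.vecMul, dotProduct, hatGd] using this
        exact ⟨v, hGd, hhat, fun _ => by
          intro h0
          apply hvc
          simpa [dotProduct, colMat] using h0⟩
      · exact ⟨0, by simp, fun k _ => by simp, fun h' => absurd h' hij⟩
    choose vv hv1 hv2 hv3 using main
    have scl : ∀ i j, ∃ α : RatFunc ℝ, α ≠ 0 ∧ ∀ t,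
        ((α * (Sum.elim (vv i j) (-(vv i j ᵥ* Gu)) t)).IsProperR ∧
         (α * (Sum.elim (vv i j) (-(vv i j ᵥ* Gu)) t)).IsStableR) :=
      fun i j => exists_scale _
    choose αf hα0 hαps using scl
    set V : ∀ i : Fin nb, Matrix (Fin mf) (Fin p) (RatFunc ℝ) :=
      fun i => Matrix.of fun j c => vv i j c with hV
    refine ⟨fun _ => mf, fun i =>
      Matrix.diagonal (fun j => αf i j) * Matrix.fromCols (V i) (-(V i * Gu)), fun i => ?_⟩
    have hW : ∀ (j : Fin mf) (c : Fin p ⊕ Fin mu),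
        (Matrix.fromCols (V i) (-(V i * Gu))) j c
          = Sum.elim (vv i j) (-(vv i j ᵥ* Gu)) c := by
      rintro j (c | c)
      · rfl
      · show (-(V i * Gu)) j c = -(vv i j ᵥ* Gu) c
        simp [Matrix.mul_apply, Matrix.vecMul, dotProduct, hV]
    have hentry : ∀ (j : Fin mf) (c : Fin p ⊕ Fin mu),
        (Matrix.diagonal (fun j => αf i j) * Matrix.fromCols (V i) (-(V i * Gu))) j c
          = αf i j * Sum.elim (vv i j) (-(vv i j ᵥ* Gu)) c := by
      intro j c
      rw [Matrix.diagonal_mul, hW]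
    refine ⟨?_, ?_, ?_, ?_, ?_⟩
    · intro j c
      show ((Matrix.diagonal (fun j => αf i j)
        * Matrix.fromCols (V i) (-(V i * Gu))) j c).IsProperR
      rw [hentry]
      exact (hαps i j c).1
    · intro j c
      show ((Matrix.diagonal (fun j => αf i j)
        * Matrix.fromCols (V i) (-(V i * Gu))) j c).IsStableR
      rw [hentry]
      exact (hαps i j c).2
    · rw [Matrix.mul_assoc, Matrix.fromCols_mul_fromRows, Matrix.mul_one,
        add_neg_cancel, Matrix.mul_zero]
    · rw [Matrix.mul_assoc, Matrix.fromCols_mul_fromRows, Matrix.mul_zero, add_zero]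
      have hVGd : V i * Gd = 0 := by
        ext r c
        have := congrFun (hv1 i r) c
        simpa [Matrix.mul_apply, Matrix.vecMul, dotProduct, hV] using this
      rw [hVGd, Matrix.mul_zero]
    · intro j
      rw [Matrix.mul_assoc, Matrix.fromCols_mul_fromRows, Matrix.mul_zero, add_zero]
      by_cases hij : S i j = true
      · simp only [hij, iff_true]
        intro h0
        have hent := congrFun (congrFun h0 j) 0
        rw [Matrix.diagonal_mul] at hent
        apply mul_ne_zero (hα0 i j) (hv3 i j hij)
        have : (V i * colMat Gf j) j 0 = vv i j ⬝ᵥ (fun r => Gf r j) := by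
          simp [Matrix.mul_apply, dotProduct, hV, colMat]
        rw [this] at hent
        simpa using hent
      · have hf : S i j = false := Bool.eq_false_iff.mpr hij
        have hVc : V i * colMat Gf j = 0 := by
          ext r c
          have := hv2 i r j hf
          simpa [Matrix.mul_apply, dotProduct, hV, colMat] using this
        rw [hVc, Matrix.mul_zero]
        simp [hf]


end
end

section
/- For the system y = G_u u + G_d d + G_f f + G_w w, the approximate fault detection problem (AFDP) is solvable if and only if the exact fault detection problem (EFDP, i.e., the problem with w ≡ 0) is solvable; equivalently, the AFDP is solvable if and only if the system is completely fault detectable. -/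
/-!
Statement 7: For the system y = G_u u + G_d d + G_f f + G_w w, the approximate
fault detection problem (AFDP) is solvable if and only if the exact fault
detection problem (EFDP, the problem with w ≡ 0) is solvable; equivalently, the
AFDP is solvable if and only if the system is completely fault detectable.
-/

open Matrix Polynomial

noncomputable section

/-- The `H∞`-norm of a real rational matrix: the supremum over all frequencies
`ω` of the (entrywise) magnitude of the frequency response `G(iω)`. -/
noncomputable def hinfNorm {m n : Type*} [Fintype m] [Fintype n]
    (G : Matrix m n (RatFunc ℝ)) : ℝ :=
  ⨆ ω : ℝ, ⨆ i : m, ⨆ j : n,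
    ‖RatFunc.eval (algebraMap ℝ ℂ) (Complex.I * ω) (G i j)‖

/-- Solvability of the exact fault detection problem (EFDP): a proper stable
filter decoupling `u` and `d`, with stable fault channel `R_f` all of whose
columns are nonzero. -/
def EFDPSolvable {p mu md mf : ℕ}
    (Gu : Matrix (Fin p) (Fin mu) (RatFunc ℝ))
    (Gd : Matrix (Fin p) (Fin md) (RatFunc ℝ))
    (Gf : Matrix (Fin p) (Fin mf) (RatFunc ℝ)) : Prop :=
  ∃ (q : ℕ) (Q : Matrix (Fin q) (Fin p ⊕ Fin mu) (RatFunc ℝ)),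
    Q.IsProperR ∧ Q.IsStableR ∧
    Q * Matrix.fromRows Gu (1 : Matrix (Fin mu) (Fin mu) (RatFunc ℝ)) = 0 ∧
    Q * Matrix.fromRows Gd (0 : Matrix (Fin mu) (Fin md) (RatFunc ℝ)) = 0 ∧
    (Q * Matrix.fromRows Gf (0 : Matrix (Fin mu) (Fin mf) (RatFunc ℝ))).IsStableR ∧
    ∀ j : Fin mf,
      Q * Matrix.fromRows (colMat Gf j) (0 : Matrix (Fin mu) (Fin 1) (RatFunc ℝ)) ≠ 0

/-- Solvability of the approximate fault detection problem (AFDP): for every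
`ε > 0` there is a proper stable filter decoupling `u` and `d`, with stable fault
channel whose columns are all nonzero, and with stable noise channel `R_w` of
`H∞`-norm smaller than `ε` (i.e., `R_w ≈ 0` can be enforced). -/
def AFDPSolvable {p mu md mf mw : ℕ}
    (Gu : Matrix (Fin p) (Fin mu) (RatFunc ℝ))
    (Gd : Matrix (Fin p) (Fin md) (RatFunc ℝ))
    (Gf : Matrix (Fin p) (Fin mf) (RatFunc ℝ))
    (Gw : Matrix (Fin p) (Fin mw) (RatFunc ℝ)) : Prop :=
  ∀ ε : ℝ, 0 < ε →
    ∃ (q : ℕ) (Q : Matrix (Fin q) (Fin p ⊕ Fin mu) (RatFunc ℝ)),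
      Q.IsProperR ∧ Q.IsStableR ∧
      Q * Matrix.fromRows Gu (1 : Matrix (Fin mu) (Fin mu) (RatFunc ℝ)) = 0 ∧
      Q * Matrix.fromRows Gd (0 : Matrix (Fin mu) (Fin md) (RatFunc ℝ)) = 0 ∧
      (Q * Matrix.fromRows Gf (0 : Matrix (Fin mu) (Fin mf) (RatFunc ℝ))).IsStableR ∧
      (∀ j : Fin mf,
        Q * Matrix.fromRows (colMat Gf j) (0 : Matrix (Fin mu) (Fin 1) (RatFunc ℝ)) ≠ 0) ∧
      (Q * Matrix.fromRows Gw (0 : Matrix (Fin mu) (Fin mw) (RatFunc ℝ))).IsStableR ∧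
      hinfNorm (Q * Matrix.fromRows Gw (0 : Matrix (Fin mu) (Fin mw) (RatFunc ℝ))) < ε

namespace AFDPAux

/-- The standard stable denominator `(X+1)^N`. -/
def sden (N : ℕ) : ℝ[X] := (X + 1) ^ N

lemma X_add_one_ne_zero : (X + 1 : ℝ[X]) ≠ 0 := by
  have := Polynomial.monic_X_add_C (1 : ℝ)
  simpa using this.ne_zero

lemma sden_ne_zero (N : ℕ) : sden N ≠ 0 := pow_ne_zero _ X_add_one_ne_zero

lemma natDegree_sden (N : ℕ) : (sden N).natDegree = N := by
  have hd : (X + 1 : ℝ[X]).natDegree = 1 := by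
    simpa using Polynomial.natDegree_X_add_C (1 : ℝ)
  simp [sden, Polynomial.natDegree_pow, hd]

/-- `g / (X+1)^N` as a rational function. -/
def scl (g : ℝ[X]) (N : ℕ) : RatFunc ℝ :=
  algebraMap _ _ g / algebraMap _ _ (sden N)

lemma scl_cross (g : ℝ[X]) (N : ℕ) :
    (scl g N).num * sden N = (scl g N).denom * g := by
  apply RatFunc.algebraMap_injective ℝ
  rw [_root_.map_mul, _root_.map_mul]
  have h1 : algebraMap ℝ[X] (RatFunc ℝ) (scl g N).num /
      algebraMap _ _ (scl g N).denom = scl g N := RatFunc.num_div_denom _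
  conv_rhs at h1 => rw [scl]
  rw [div_eq_div_iff (RatFunc.algebraMap_ne_zero (RatFunc.denom_ne_zero _))
    (RatFunc.algebraMap_ne_zero (sden_ne_zero N))] at h1
  rw [h1]; ring

lemma scl_denom_dvd (g : ℝ[X]) (N : ℕ) : (scl g N).denom ∣ sden N := by
  have hc := (RatFunc.isCoprime_num_denom (scl g N)).symm
  exact hc.dvd_of_dvd_mul_left ⟨g, scl_cross g N⟩

lemma scl_stable (g : ℝ[X]) (N : ℕ) :
    ∀ z : ℂ, ((scl g N).denom.map (algebraMap ℝ ℂ)).IsRoot z → z.re < 0 := by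
  intro z hz
  obtain ⟨t, ht⟩ := scl_denom_dvd g N
  have hroot : ((sden N).map (algebraMap ℝ ℂ)).IsRoot z := by
    rw [ht, Polynomial.map_mul]
    simp only [Polynomial.IsRoot, Polynomial.eval_mul] at hz ⊢
    rw [hz, zero_mul]
  have : ((z + 1) ^ N : ℂ) = 0 := by
    have := hroot
    simp only [sden, Polynomial.map_pow, Polynomial.map_add, Polynomial.map_X,
      Polynomial.map_one, Polynomial.IsRoot, Polynomial.eval_pow, Polynomial.eval_add,
      Polynomial.eval_X, Polynomial.eval_one] at this
    exact this
  have hz1 : z + 1 = 0 := by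
    exact (pow_eq_zero_iff'.mp this).1
  have hzz : z = -1 := by linear_combination hz1
  rw [hzz]; norm_num

lemma scl_proper {g : ℝ[X]} {N : ℕ} (hg : g.natDegree ≤ N) :
    (scl g N).num.natDegree ≤ (scl g N).denom.natDegree := by
  by_cases hg0 : g = 0
  · have : scl g N = 0 := by simp [scl, hg0]
    simp [this]
  · have hf0 : scl g N ≠ 0 := by
      apply div_ne_zero (RatFunc.algebraMap_ne_zero hg0)
        (RatFunc.algebraMap_ne_zero (sden_ne_zero N))
    have hnum : (scl g N).num ≠ 0 := RatFunc.num_ne_zero hf0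
    have h := congrArg Polynomial.natDegree (scl_cross g N)
    rw [Polynomial.natDegree_mul hnum (sden_ne_zero N),
      Polynomial.natDegree_mul (RatFunc.denom_ne_zero _) hg0, natDegree_sden] at h
    omega

lemma scl_eval_bound {g : ℝ[X]} {N : ℕ} (hg : g.natDegree ≤ N) (ω : ℝ) :
    ‖RatFunc.eval (algebraMap ℝ ℂ) (Complex.I * ω) (scl g N)‖ ≤
      ∑ k ∈ Finset.range (N + 1), |g.coeff k| := by
  set φ := algebraMap ℝ ℂ
  set z : ℂ := Complex.I * ω with hz
  have hzre : (z + 1).re = 1 := by simp [hz]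
  have hz1 : z + 1 ≠ 0 := fun h => by simp [h] at hzre
  have hsdeval : Polynomial.eval₂ φ z (sden N) = (z + 1) ^ N := by
    simp [sden, φ]
  have hde : Polynomial.eval₂ φ z (scl g N).denom ≠ 0 := by
    obtain ⟨t, ht⟩ := scl_denom_dvd g N
    intro h0
    have : Polynomial.eval₂ φ z (sden N) = 0 := by
      rw [ht, Polynomial.eval₂_mul, h0, zero_mul]
    rw [hsdeval] at this
    exact pow_ne_zero N hz1 this
  have hkey : Polynomial.eval₂ φ z (scl g N).num * (z + 1) ^ N =
      Polynomial.eval₂ φ z (scl g N).denom * Polynomial.eval₂ φ z g := by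
    have := congrArg (Polynomial.eval₂ φ z) (scl_cross g N)
    rwa [Polynomial.eval₂_mul, Polynomial.eval₂_mul, hsdeval] at this
  have heval : RatFunc.eval φ z (scl g N) * (z + 1) ^ N = Polynomial.eval₂ φ z g := by
    rw [RatFunc.eval]
    field_simp
    linear_combination hkey
  set b : ℝ := ‖z + 1‖ with hb
  have hb1 : (1 : ℝ) ≤ b := by
    have := Complex.abs_re_le_norm (z + 1)
    rw [hzre] at this; simpa [hb] using this
  have hbω : |ω| ≤ b := by
    have := Complex.abs_im_le_norm (z + 1)
    have him : (z + 1).im = ω := by simp [hz]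
    rw [him] at this; simpa [hb] using this
  have habsz : ‖z‖ = |ω| := by
    simp [hz, Complex.norm_real]
  have hgev : Polynomial.eval₂ φ z g =
      ∑ k ∈ Finset.range (N + 1), φ (g.coeff k) * z ^ k :=
    Polynomial.eval₂_eq_sum_range' φ (Nat.lt_succ_of_le hg) z
  have hgb : ‖Polynomial.eval₂ φ z g‖ ≤
      (∑ k ∈ Finset.range (N + 1), |g.coeff k|) * b ^ N := by
    rw [hgev, Finset.sum_mul]
    refine (norm_sum_le _ _).trans (Finset.sum_le_sum ?_)
    intro k hk
    rw [norm_mul, norm_pow]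
    have h1 : ‖φ (g.coeff k)‖ = |g.coeff k| := by
      simp [φ, Complex.norm_real]
    rw [h1, habsz]
    have h2 : |ω| ^ k ≤ b ^ N := by
      calc |ω| ^ k ≤ b ^ k := pow_le_pow_left₀ (abs_nonneg ω) hbω k
        _ ≤ b ^ N := pow_le_pow_right₀ hb1 (Finset.mem_range_succ_iff.mp hk)
    exact mul_le_mul_of_nonneg_left h2 (abs_nonneg _)
  have hbN : (0 : ℝ) < b ^ N := pow_pos (lt_of_lt_of_le one_pos hb1) N
  have habs : ‖RatFunc.eval φ z (scl g N)‖ * b ^ N =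
      ‖Polynomial.eval₂ φ z g‖ := by
    rw [← heval, norm_mul, norm_pow]
  calc ‖RatFunc.eval φ z (scl g N)‖ =
      ‖Polynomial.eval₂ φ z g‖ / b ^ N := by
        rw [← habs]; field_simp
    _ ≤ ∑ k ∈ Finset.range (N + 1), |g.coeff k| := by
        rw [div_le_iff₀ hbN]
        exact hgb

lemma scl_mul_eq {e : RatFunc ℝ} {r D : ℝ[X]} (hD : e.denom * r = D) (N : ℕ) :
    scl D N * e = scl (r * e.num) N := by
  have hde : algebraMap ℝ[X] (RatFunc ℝ) e.denom ≠ 0 :=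
    RatFunc.algebraMap_ne_zero (RatFunc.denom_ne_zero e)
  have hsd : algebraMap ℝ[X] (RatFunc ℝ) (sden N) ≠ 0 :=
    RatFunc.algebraMap_ne_zero (sden_ne_zero N)
  have h : algebraMap ℝ[X] (RatFunc ℝ) e.denom * e = algebraMap _ _ e.num := by
    rw [mul_comm]
    exact (eq_div_iff hde).mp (RatFunc.num_div_denom e).symm
  rw [scl, scl, ← hD, _root_.map_mul, _root_.map_mul]
  field_simp
  linear_combination (algebraMap ℝ[X] (RatFunc ℝ) r) * h

/-- Master scaling lemma. -/
lemma master {ι : Type*} [Fintype ι] (E : ι → RatFunc ℝ) {ε : ℝ} (hε : 0 < ε) :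
    ∃ α : RatFunc ℝ, α ≠ 0 ∧
      (∀ i, (α * E i).num.natDegree ≤ (α * E i).denom.natDegree) ∧
      (∀ i, ∀ z : ℂ, ((α * E i).denom.map (algebraMap ℝ ℂ)).IsRoot z → z.re < 0) ∧
      (∀ i (ω : ℝ),
        ‖RatFunc.eval (algebraMap ℝ ℂ) (Complex.I * ω) (α * E i)‖ ≤ ε) := by
  classical
  set D : ℝ[X] := ∏ i : ι, (E i).denom with hDdef
  have hD0 : D ≠ 0 := Finset.prod_ne_zero_iff.mpr fun i _ => RatFunc.denom_ne_zero _
  have hdvd : ∀ i, (E i).denom ∣ D := fun i => Finset.dvd_prod_of_mem _ (Finset.mem_univ i)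
  set r : ι → ℝ[X] := fun i => (hdvd i).choose with hrdef
  have hr : ∀ i, (E i).denom * r i = D := fun i => ((hdvd i).choose_spec).symm
  have hr0 : ∀ i, r i ≠ 0 := by
    intro i h0
    apply hD0; rw [← hr i, h0, mul_zero]
  have hrdeg : ∀ i, (r i).natDegree ≤ D.natDegree := by
    intro i
    have := congrArg Polynomial.natDegree (hr i)
    rw [Polynomial.natDegree_mul (RatFunc.denom_ne_zero _) (hr0 i)] at this
    omega
  set N : ℕ := D.natDegree + Finset.univ.sup fun i => (E i).num.natDegree with hNdef
  set g : ι → ℝ[X] := fun i => r i * (E i).num with hgdef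
  have hgdeg : ∀ i, (g i).natDegree ≤ N := by
    intro i
    refine (Polynomial.natDegree_mul_le).trans ?_
    have h2 : (E i).num.natDegree ≤ Finset.univ.sup fun i => (E i).num.natDegree :=
      Finset.le_sup (f := fun i => (E i).num.natDegree) (Finset.mem_univ i)
    have h1 := hrdeg i
    omega
  set S : ℝ := ∑ i : ι, ∑ k ∈ Finset.range (N + 1), |(g i).coeff k| with hSdef
  have hS0 : 0 ≤ S := Finset.sum_nonneg fun i _ =>
    Finset.sum_nonneg fun k _ => abs_nonneg _
  set c : ℝ := ε / (2 * (S + 1)) with hcdef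
  have hc0 : 0 < c := div_pos hε (by linarith)
  refine ⟨scl (Polynomial.C c * D) N, ?_, ?_, ?_, ?_⟩
  · rw [scl]
    apply div_ne_zero _ (RatFunc.algebraMap_ne_zero (sden_ne_zero N))
    exact RatFunc.algebraMap_ne_zero (mul_ne_zero (by
      simpa using hc0.ne') hD0)
  all_goals {
    intro i
    have hmul : scl (Polynomial.C c * D) N * E i = scl (Polynomial.C c * g i) N := by
      have hcr : (E i).denom * (Polynomial.C c * r i) = Polynomial.C c * D := by
        rw [← hr i]; ring
      rw [scl_mul_eq hcr N, hgdef]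
      congr 1; ring
    have hcd : (Polynomial.C c * g i).natDegree ≤ N := by
      refine le_trans (Polynomial.natDegree_mul_le) ?_
      have := hgdeg i
      simp only [Polynomial.natDegree_C]
      omega
    rw [hmul]
    first
    | exact scl_proper hcd
    | exact scl_stable _ _
    | { intro ω
        refine (scl_eval_bound hcd ω).trans ?_
        have hcoeff : ∀ k, |(Polynomial.C c * g i).coeff k| = c * |(g i).coeff k| := by
          intro k
          rw [Polynomial.coeff_C_mul, abs_mul, abs_of_pos hc0]
        calc (∑ k ∈ Finset.range (N + 1), |(Polynomial.C c * g i).coeff k|)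
            = c * ∑ k ∈ Finset.range (N + 1), |(g i).coeff k| := by
              rw [Finset.mul_sum]; exact Finset.sum_congr rfl fun k _ => hcoeff k
          _ ≤ c * S := by
              refine mul_le_mul_of_nonneg_left ?_ hc0.le
              exact Finset.single_le_sum (f := fun i => ∑ k ∈ Finset.range (N + 1), |(g i).coeff k|)
                (fun i _ => Finset.sum_nonneg fun k _ => abs_nonneg _) (Finset.mem_univ i)
          _ ≤ ε := by
              rw [hcdef]
              rw [div_mul_eq_mul_div, div_le_iff₀ (by linarith)]
              nlinarith } }

section LinAlg

variable {F : Type*} [Field F] {p md : ℕ}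

/-- The single-column matrix built from a vector. -/
def cvec (x : Fin p → F) : Matrix (Fin p) (Fin 1) F := Matrix.of fun i _ => x i

omit [Field F] in
lemma range_fromColumns_transpose (A : Matrix (Fin p) (Fin md) F) (x : Fin p → F) :
    Set.range (Matrix.fromCols A (cvec x))ᵀ = Set.range Aᵀ ∪ {x} := by
  ext y
  constructor
  · rintro ⟨i | i, rfl⟩
    · left; exact ⟨i, by ext k; simp [Matrix.fromCols]⟩
    · right; ext k; simp [Matrix.fromCols, cvec]
  · rintro (⟨i, rfl⟩ | rfl)
    · exact ⟨Sum.inl i, by ext k; simp [Matrix.fromCols]⟩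
    · exact ⟨Sum.inr 0, by ext k; simp [Matrix.fromCols, cvec]⟩

lemma span_fromColumns (A : Matrix (Fin p) (Fin md) F) (x : Fin p → F) :
    Submodule.span F (Set.range (Matrix.fromCols A (cvec x))ᵀ)
      = Submodule.span F (Set.range Aᵀ) ⊔ Submodule.span F {x} := by
  rw [range_fromColumns_transpose, Submodule.span_union]

lemma rank_lt_iff_notmem (A : Matrix (Fin p) (Fin md) F) (x : Fin p → F) :
    A.rank < (Matrix.fromCols A (cvec x)).rank ↔
      x ∉ Submodule.span F (Set.range Aᵀ) := by
  rw [Matrix.rank_eq_finrank_span_cols, Matrix.rank_eq_finrank_span_cols, Matrix.col,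
    Matrix.col, span_fromColumns]
  constructor
  · intro h hx
    have : Submodule.span F (Set.range Aᵀ) ⊔ Submodule.span F {x}
        = Submodule.span F (Set.range Aᵀ) := by
      rw [sup_eq_left]
      rwa [Submodule.span_singleton_le_iff_mem]
    rw [this] at h
    exact lt_irrefl _ h
  · intro hx
    apply Submodule.finrank_lt_finrank_of_lt
    rw [lt_iff_le_and_ne]
    refine ⟨le_sup_left, fun h => hx ?_⟩
    rw [h]
    exact Submodule.mem_sup_right (Submodule.mem_span_singleton_self x)

/-- The dot-product functional as a linear map. -/
def dotL (v : Fin p → F) : (Fin p → F) →ₗ[F] F where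
  toFun y := ∑ k, v k * y k
  map_add' y z := by simp [mul_add, Finset.sum_add_distrib]
  map_smul' c y := by simp [Finset.mul_sum, mul_left_comm]

lemma notmem_of_annihilator {A : Matrix (Fin p) (Fin md) F} {x v : Fin p → F}
    (hA : ∀ l, ∑ k, v k * A k l = 0) (hx : ∑ k, v k * x k ≠ 0) :
    x ∉ Submodule.span F (Set.range Aᵀ) := by
  intro hmem
  have hker : Submodule.span F (Set.range Aᵀ) ≤ LinearMap.ker (dotL v) := by
    rw [Submodule.span_le]
    rintro _ ⟨l, rfl⟩
    simpa [dotL] using hA l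
  exact hx (by simpa [dotL] using hker hmem)

lemma annihilator_of_notmem {A : Matrix (Fin p) (Fin md) F} {x : Fin p → F}
    (hx : x ∉ Submodule.span F (Set.range Aᵀ)) :
    ∃ v : Fin p → F, (∀ l, ∑ k, v k * A k l = 0) ∧ ∑ k, v k * x k ≠ 0 := by
  obtain ⟨f, hfx, hbot⟩ :=
    Submodule.exists_dual_map_eq_bot_of_notMem hx inferInstance
  set v : Fin p → F := fun k => f fun j => if k = j then 1 else 0 with hv
  have hfy : ∀ y : Fin p → F, f y = ∑ k, v k * y k := by
    intro y
    rw [LinearMap.pi_apply_eq_sum_univ f y]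
    exact Finset.sum_congr rfl fun k _ => by simp [hv, mul_comm]
  refine ⟨v, ?_, ?_⟩
  · intro l
    have hmem : Aᵀ l ∈ Submodule.span F (Set.range Aᵀ) :=
      Submodule.subset_span ⟨l, rfl⟩
    have h0 : f (Aᵀ l) = 0 := by
      have : f (Aᵀ l) ∈ (Submodule.span F (Set.range Aᵀ)).map f :=
        Submodule.mem_map_of_mem hmem
      rwa [hbot, Submodule.mem_bot] at this
    rw [hfy] at h0
    simpa [Matrix.transpose_apply] using h0
  · intro h0
    exact hfx (by rw [hfy]; exact h0)

end LinAlg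

end AFDPAux


section MainImplications

variable {p mu md mf mw : ℕ}
  (Gu : Matrix (Fin p) (Fin mu) (RatFunc ℝ))
  (Gd : Matrix (Fin p) (Fin md) (RatFunc ℝ))
  (Gf : Matrix (Fin p) (Fin mf) (RatFunc ℝ))
  (Gw : Matrix (Fin p) (Fin mw) (RatFunc ℝ))

lemma afdp_to_efdp (h : AFDPSolvable Gu Gd Gf Gw) : EFDPSolvable Gu Gd Gf := by
  obtain ⟨q, Q, h1, h2, h3, h4, h5, h6, -, -⟩ := h 1 one_pos
  exact ⟨q, Q, h1, h2, h3, h4, h5, h6⟩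

lemma efdp_to_rank (h : EFDPSolvable Gu Gd Gf) :
    ∀ j : Fin mf, Gd.rank < (Matrix.fromCols Gd (colMat Gf j)).rank := by
  obtain ⟨q, Q, -, -, -, hd, -, hnz⟩ := h
  intro j
  have hne := hnz j
  have hex : ∃ i, ∑ k : Fin p, Q i (Sum.inl k) * Gf k j ≠ 0 := by
    by_contra hc
    push_neg at hc
    apply hne
    ext i l
    rw [Matrix.mul_apply, Fintype.sum_sum_type]
    simp only [Matrix.fromRows_apply_inl, Matrix.fromRows_apply_inr, Matrix.zero_apply,
      mul_zero, Finset.sum_const_zero, add_zero]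
    simpa [colMat] using hc i
  obtain ⟨i, hi⟩ := hex
  set v : Fin p → RatFunc ℝ := fun k => Q i (Sum.inl k) with hv
  have hA : ∀ l, ∑ k, v k * Gd k l = 0 := by
    intro l
    have h0 := congrFun (congrFun hd i) l
    rw [Matrix.mul_apply, Fintype.sum_sum_type] at h0
    simpa [Matrix.fromRows_apply_inl, Matrix.fromRows_apply_inr] using h0
  have hx : ∑ k, v k * Gf k j ≠ 0 := hi
  exact (AFDPAux.rank_lt_iff_notmem Gd (fun k => Gf k j)).mpr
    (AFDPAux.notmem_of_annihilator hA hx)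

lemma rank_to_afdp
    (hrk : ∀ j : Fin mf, Gd.rank < (Matrix.fromCols Gd (colMat Gf j)).rank) :
    AFDPSolvable Gu Gd Gf Gw := by
  classical
  intro ε hε
  have hnm : ∀ j, (fun k => Gf k j) ∉
      Submodule.span (RatFunc ℝ) (Set.range Gdᵀ) := fun j =>
    (AFDPAux.rank_lt_iff_notmem Gd (fun k => Gf k j)).mp (hrk j)
  choose v hA hx using fun j => AFDPAux.annihilator_of_notmem (hnm j)
  set E : Fin mf × (Fin p ⊕ (Fin mu ⊕ (Fin mf ⊕ Fin mw))) → RatFunc ℝ := fun x =>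
    Sum.elim (fun k => v x.1 k)
      (Sum.elim (fun k => -∑ t, v x.1 t * Gu t k)
        (Sum.elim (fun k => ∑ t, v x.1 t * Gf t k)
          (fun k => ∑ t, v x.1 t * Gw t k))) x.2 with hE
  obtain ⟨α, hα0, hprop, hstab, hbound⟩ := AFDPAux.master E (half_pos hε)
  set Q : Matrix (Fin mf) (Fin p ⊕ Fin mu) (RatFunc ℝ) :=
    Matrix.of fun j k => α * E (j, Sum.map id Sum.inl k) with hQ
  have hQ1 : ∀ j k, Q j (Sum.inl k) = α * v j k := fun _ _ => rfl
  have hQ2 : ∀ j b, Q j (Sum.inr b) = α * E (j, Sum.inr (Sum.inl b)) := fun _ _ => rfl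
  have hE2 : ∀ j k, E (j, Sum.inr (Sum.inl k)) = -∑ t, v j t * Gu t k := fun _ _ => rfl
  have hE3 : ∀ j k, E (j, Sum.inr (Sum.inr (Sum.inl k))) = ∑ t, v j t * Gf t k :=
    fun _ _ => rfl
  have hE4 : ∀ j k, E (j, Sum.inr (Sum.inr (Sum.inr k))) = ∑ t, v j t * Gw t k :=
    fun _ _ => rfl
  have hmul : ∀ {m' : ℕ} (X : Matrix (Fin p) (Fin m') (RatFunc ℝ))
      (Z : Matrix (Fin mu) (Fin m') (RatFunc ℝ)) (j : Fin mf) (l : Fin m'),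
      (Q * Matrix.fromRows X Z) j l
        = α * ((∑ t, v j t * X t l) + ∑ b, E (j, Sum.inr (Sum.inl b)) * Z b l) := by
    intro m' X Z j l
    rw [Matrix.mul_apply, Fintype.sum_sum_type]
    simp only [Matrix.fromRows_apply_inl, Matrix.fromRows_apply_inr, hQ1, hQ2]
    rw [mul_add, Finset.mul_sum, Finset.mul_sum]
    congr 1 <;> exact Finset.sum_congr rfl fun k _ => by ring
  refine ⟨mf, Q, ?_, ?_, ?_, ?_, ?_, ?_, ?_, ?_⟩
  · -- proper
    rintro j (k | k)
    · exact hprop (j, Sum.inl k)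
    · exact hprop (j, Sum.inr (Sum.inl k))
  · -- stable
    rintro j (k | k)
    · exact hstab (j, Sum.inl k)
    · exact hstab (j, Sum.inr (Sum.inl k))
  · -- decouple u
    ext j l
    rw [hmul Gu 1 j l]
    have h1 : ∑ b, E (j, Sum.inr (Sum.inl b)) * (1 : Matrix (Fin mu) (Fin mu) (RatFunc ℝ)) b l
        = E (j, Sum.inr (Sum.inl l)) := by
      simp [Matrix.one_apply]
    rw [h1, hE2]
    simp
  · -- decouple d
    ext j l
    rw [hmul Gd 0 j l, hA j l]
    simp
  · -- R_f stable
    intro j l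
    have hRf : (Q * Matrix.fromRows Gf (0 : Matrix (Fin mu) (Fin mf) (RatFunc ℝ))) j l
        = α * E (j, Sum.inr (Sum.inr (Sum.inl l))) := by
      rw [hmul Gf 0 j l, hE3]
      simp
    rw [hRf]
    exact hstab _
  · -- columns of R_f nonzero
    intro j heq
    have h0 := congrFun (congrFun heq j) 0
    rw [hmul (colMat Gf j) 0 j 0] at h0
    have hcol : ∀ t, colMat Gf j t 0 = Gf t j := fun _ => rfl
    simp only [hcol, Matrix.zero_apply, mul_zero, Finset.sum_const_zero, add_zero,
      Matrix.zero_apply] at h0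
    exact mul_ne_zero hα0 (hx j) h0
  · -- R_w stable
    intro j l
    have hRw : (Q * Matrix.fromRows Gw (0 : Matrix (Fin mu) (Fin mw) (RatFunc ℝ))) j l
        = α * E (j, Sum.inr (Sum.inr (Sum.inr l))) := by
      rw [hmul Gw 0 j l, hE4]
      simp
    rw [hRw]
    exact hstab _
  · -- hinfNorm small
    have hRw : ∀ j l, (Q * Matrix.fromRows Gw (0 : Matrix (Fin mu) (Fin mw) (RatFunc ℝ))) j l
        = α * E (j, Sum.inr (Sum.inr (Sum.inr l))) := by
      intro j l
      rw [hmul Gw 0 j l, hE4]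
      simp
    refine lt_of_le_of_lt ?_ (half_lt_self hε)
    rw [hinfNorm]
    refine Real.iSup_le (fun ω => ?_) (half_pos hε).le
    refine Real.iSup_le (fun j => ?_) (half_pos hε).le
    refine Real.iSup_le (fun l => ?_) (half_pos hε).le
    rw [hRw j l]
    exact hbound (j, Sum.inr (Sum.inr (Sum.inr l))) ω

end MainImplications

/-- **Solvability of the AFDP**: the AFDP is solvable iff the EFDP is solvable,
equivalently iff the system is completely fault detectable. -/
theorem afdp_solvable_iff
    (p mu md mf mw : ℕ)
    (Gu : Matrix (Fin p) (Fin mu) (RatFunc ℝ))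
    (Gd : Matrix (Fin p) (Fin md) (RatFunc ℝ))
    (Gf : Matrix (Fin p) (Fin mf) (RatFunc ℝ))
    (Gw : Matrix (Fin p) (Fin mw) (RatFunc ℝ)) :
    (AFDPSolvable Gu Gd Gf Gw ↔ EFDPSolvable Gu Gd Gf) ∧
      (AFDPSolvable Gu Gd Gf Gw ↔
        ∀ j : Fin mf, Gd.rank < (Matrix.fromCols Gd (colMat Gf j)).rank) := by
  constructor
  · exact ⟨fun h => afdp_to_efdp Gu Gd Gf Gw h,
      fun h => rank_to_afdp Gu Gd Gf Gw (efdp_to_rank Gu Gd Gf h)⟩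
  · exact ⟨fun h => efdp_to_rank Gu Gd Gf (afdp_to_efdp Gu Gd Gf Gw h),
      fun h => rank_to_afdp Gu Gd Gf Gw h⟩


end
end

section
/- For the system y = G_u u + G_d d + G_f f (w ≡ 0) and a given stable proper reference model M_{rf}(λ), the exact model-matching problem—find stable proper Q(λ) and a diagonal, proper, stable, invertible M(λ) with Q·[G_u;I]=0, Q·[G_d;0]=0 and Q·[G_f;0] = M·M_{rf}—is solvable if and only if rank [G_d(λ) G_f(λ)] = rank [[G_d(λ), G_f(λ)],[0, M_{rf}(λ)]]. -/
/-!
Statement 8: For the system y = G_u u + G_d d + G_f f (w ≡ 0) and a given stable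
proper reference model M_{rf}(λ), the exact model-matching problem — find stable
proper Q(λ) and a diagonal, proper, stable, invertible M(λ) with Q·[G_u;I] = 0,
Q·[G_d;0] = 0 and Q·[G_f;0] = M·M_{rf} — is solvable if and only if
rank [G_d  G_f] = rank [[G_d, G_f],[0, M_{rf}]].
-/

open Matrix Polynomial

noncomputable section

/-! ### Auxiliary scalar lemmas -/

lemma isProperR_zero : (0 : RatFunc ℝ).IsProperR := by
  simp [RatFunc.IsProperR]

lemma isStableR_zero : (0 : RatFunc ℝ).IsStableR := by
  intro z hz
  simp [Polynomial.IsRoot] at hz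

/-- Properness of a quotient with degree inequality. -/
lemma isProperR_div {a b : ℝ[X]} (hb : b ≠ 0) (h : a.natDegree ≤ b.natDegree) :
    RatFunc.IsProperR (algebraMap ℝ[X] (RatFunc ℝ) a / algebraMap ℝ[X] (RatFunc ℝ) b) := by
  unfold RatFunc.IsProperR
  rw [RatFunc.num_div, RatFunc.denom_div a hb]
  have hgb : gcd a b ∣ b := gcd_dvd_right a b
  have hg : gcd a b ≠ 0 := by
    intro h0
    exact hb ((gcd_eq_zero_iff a b).mp h0).2
  have hbg : b / gcd a b ≠ 0 := by
    intro h0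
    apply hb
    have := EuclideanDomain.mul_div_cancel' hg hgb
    rw [h0, mul_zero] at this
    exact this.symm
  have hlc : ((b / gcd a b).leadingCoeff)⁻¹ ≠ 0 := by
    simpa using hbg
  rw [natDegree_C_mul hlc, natDegree_C_mul hlc]
  by_cases ha : a = 0
  · simp [ha]
  · have hga : gcd a b ∣ a := gcd_dvd_left a b
    have hag : a / gcd a b ≠ 0 := by
      intro h0
      apply ha
      have := EuclideanDomain.mul_div_cancel' hg hga
      rw [h0, mul_zero] at this
      exact this.symm
    have ea : a.natDegree = (gcd a b).natDegree +
        (a / gcd a b).natDegree := by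
      conv_lhs => rw [← EuclideanDomain.mul_div_cancel' hg hga]
      exact natDegree_mul hg hag
    have eb : b.natDegree = (gcd a b).natDegree +
        (b / gcd a b).natDegree := by
      conv_lhs => rw [← EuclideanDomain.mul_div_cancel' hg hgb]
      exact natDegree_mul hg hbg
    omega

/-- Stability of a quotient with denominator `(X+1)^N`. -/
lemma isStableR_div_pow (a : ℝ[X]) (N : ℕ) :
    RatFunc.IsStableR (algebraMap ℝ[X] (RatFunc ℝ) a /
      algebraMap ℝ[X] (RatFunc ℝ) ((X + C 1) ^ N)) := by
  intro z hz
  have hdvd : (algebraMap ℝ[X] (RatFunc ℝ) a /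
      algebraMap ℝ[X] (RatFunc ℝ) ((X + C 1) ^ N)).denom ∣ (X + C 1) ^ N :=
    RatFunc.denom_div_dvd a _
  have hdvd' : ((algebraMap ℝ[X] (RatFunc ℝ) a /
      algebraMap ℝ[X] (RatFunc ℝ) ((X + C 1) ^ N)).denom.map (algebraMap ℝ ℂ)) ∣
      (((X + C 1) ^ N : ℝ[X]).map (algebraMap ℝ ℂ)) :=
    Polynomial.map_dvd _ hdvd
  have hroot : (((X + C 1) ^ N : ℝ[X]).map (algebraMap ℝ ℂ)).IsRoot z :=
    hz.dvd hdvd'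
  have h1 : (algebraMap ℝ ℂ) (1 : ℝ) = 1 := _root_.map_one _
  have : (z + 1) ^ N = 0 := by
    simpa [Polynomial.IsRoot, Polynomial.map_pow, Polynomial.map_add, Polynomial.map_X,
      Polynomial.map_C, h1, Polynomial.eval_pow] using hroot
  have hN : N ≠ 0 := by
    rintro rfl
    simp at this
  have hz1 : z + 1 = 0 := pow_eq_zero_iff hN |>.mp this
  have : z = -1 := by linear_combination hz1
  rw [this]
  norm_num

/-- For any finite family of rational functions, there is a nonzero proper stable
scalar `m` such that each `m * q j` is proper and stable. -/
lemma exists_row_scaling {n : Type*} [Fintype n] (q : n → RatFunc ℝ) :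
    ∃ m : RatFunc ℝ, m ≠ 0 ∧ m.IsProperR ∧ m.IsStableR ∧
      ∀ j, (m * q j).IsProperR ∧ (m * q j).IsStableR := by
  classical
  set d : ℝ[X] := ∏ j, (q j).denom with hd
  have hd0 : d ≠ 0 := Finset.prod_ne_zero_iff.mpr fun j _ => (q j).denom_ne_zero
  set N : ℕ := d.natDegree + ∑ j, (q j).num.natDegree with hN
  set b : ℝ[X] := (X + C 1) ^ N with hb
  have hbmonic : b.Monic := (monic_X_add_C (1 : ℝ)).pow N
  have hb0 : b ≠ 0 := hbmonic.ne_zero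
  have hbdeg : b.natDegree = N := by
    rw [hb, natDegree_pow, natDegree_X_add_C, mul_one]
  refine ⟨algebraMap ℝ[X] (RatFunc ℝ) d / algebraMap ℝ[X] (RatFunc ℝ) b, ?_, ?_, ?_, ?_⟩
  · apply div_ne_zero
    · simpa using hd0
    · simpa using hb0
  · exact isProperR_div hb0 (by rw [hbdeg]; exact Nat.le_add_right _ _)
  · exact isStableR_div_pow d N
  · intro j
    -- rewrite m * q j as (c * num) / b  where c = ∏_{k ≠ j} denom k
    set c : ℝ[X] := ∏ k ∈ Finset.univ.erase j, (q k).denom with hc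
    have hcd : d = (q j).denom * c := by
      rw [hd, hc, ← Finset.prod_erase_mul _ _ (Finset.mem_univ j), mul_comm]
    have hc0 : c ≠ 0 := Finset.prod_ne_zero_iff.mpr fun k _ => (q k).denom_ne_zero
    have hcdvd : c ∣ d := ⟨(q j).denom, by rw [hcd]; ring⟩
    have key : algebraMap ℝ[X] (RatFunc ℝ) d / algebraMap ℝ[X] (RatFunc ℝ) b * q j =
        algebraMap ℝ[X] (RatFunc ℝ) (c * (q j).num) / algebraMap ℝ[X] (RatFunc ℝ) b := by
      conv_lhs => rw [← RatFunc.num_div_denom (q j)]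
      rw [hcd]
      have hdenom0 : (algebraMap ℝ[X] (RatFunc ℝ)) (q j).denom ≠ 0 := by
        simpa using (q j).denom_ne_zero
      have hbb0 : (algebraMap ℝ[X] (RatFunc ℝ)) b ≠ 0 := by simpa using hb0
      have hnum : q j * (algebraMap ℝ[X] (RatFunc ℝ)) (q j).denom =
          algebraMap ℝ[X] (RatFunc ℝ) (q j).num :=
        (eq_div_iff hdenom0).mp (RatFunc.num_div_denom (q j)).symm
      field_simp
      simp only [map_mul]
      ring
    rw [key]
    constructor
    · apply isProperR_div hb0
      rw [hbdeg, hN]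
      calc (c * (q j).num).natDegree ≤ c.natDegree + (q j).num.natDegree :=
            natDegree_mul_le
        _ ≤ d.natDegree + ∑ k, (q k).num.natDegree := by
            gcongr
            · exact Polynomial.natDegree_le_of_dvd hcdvd hd0
            · exact Finset.single_le_sum (f := fun k => (q k).num.natDegree)
                (fun k _ => Nat.zero_le _) (Finset.mem_univ j)
    · exact isStableR_div_pow _ N

/-! ### Auxiliary rank lemmas -/

section RankLemmas

variable {K : Type*} [Field K] {m₁ m₂ n : Type*} [Fintype m₁] [Fintype m₂] [Fintype n]

lemma range_fromRows (A : Matrix m₁ n K) (B : Matrix m₂ n K) :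
    Set.range (fromRows A B) = Set.range A ∪ Set.range B := by
  ext x
  constructor
  · rintro ⟨i | i, rfl⟩
    · exact Or.inl ⟨i, rfl⟩
    · exact Or.inr ⟨i, rfl⟩
  · rintro (⟨i, rfl⟩ | ⟨i, rfl⟩)
    · exact ⟨Sum.inl i, rfl⟩
    · exact ⟨Sum.inr i, rfl⟩

lemma row_mem_span (A : Matrix m₁ n K) (C : Matrix m₂ m₁ K) (i : m₂) :
    (C * A) i ∈ Submodule.span K (Set.range A) := by
  have : (C * A) i = ∑ k, C i k • A k := by
    funext j
    simp [Matrix.mul_apply, Finset.sum_apply]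
  rw [this]
  exact Submodule.sum_mem _ fun k _ =>
    Submodule.smul_mem _ _ (Submodule.subset_span ⟨k, rfl⟩)

/-- If the extra rows are multiples of the original rows, the rank is unchanged. -/
lemma rank_fromRows_mul (A : Matrix m₁ n K) (C : Matrix m₂ m₁ K) :
    (fromRows A (C * A)).rank = A.rank := by
  have hspan : Submodule.span K (Set.range (fromRows A (C * A))) =
      Submodule.span K (Set.range A) := by
    rw [range_fromRows, Submodule.span_union]
    refine sup_eq_left.mpr ?_
    rw [Submodule.span_le]
    rintro x ⟨i, rfl⟩
    exact row_mem_span A C i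
  rw [Matrix.rank_eq_finrank_span_row, Matrix.rank_eq_finrank_span_row]
  exact congrArg (fun S : Submodule K (n → K) => Module.finrank K S) hspan

/-- If stacking `B` below `A` does not increase the rank, then `B = C * A` for some `C`. -/
lemma exists_eq_mul_of_rank_fromRows (A : Matrix m₁ n K) (B : Matrix m₂ n K)
    (h : A.rank = (fromRows A B).rank) : ∃ C : Matrix m₂ m₁ K, B = C * A := by
  classical
  have hle : Submodule.span K (Set.range A) ≤
      Submodule.span K (Set.range (fromRows A B)) := by
    rw [range_fromRows, Submodule.span_union]
    exact le_sup_left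
  have heq : Submodule.span K (Set.range A) =
      Submodule.span K (Set.range (fromRows A B)) := by
    apply Submodule.eq_of_le_of_finrank_eq hle
    rw [Matrix.rank_eq_finrank_span_row, Matrix.rank_eq_finrank_span_row] at h
    exact h
  have hmem : ∀ i : m₂, B i ∈ Submodule.span K (Set.range A) := by
    intro i
    rw [heq]
    apply Submodule.subset_span
    rw [range_fromRows]
    exact Or.inr ⟨i, rfl⟩
  choose c hc using fun i => (Submodule.mem_span_range_iff_exists_fun K).mp (hmem i)
  refine ⟨Matrix.of c, ?_⟩
  ext i j
  have := congrFun (hc i) j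
  simp only [Finset.sum_apply, Pi.smul_apply, smul_eq_mul] at this
  rw [Matrix.mul_apply]
  exact this.symm

end RankLemmas

/-- **Solvability of the exact model-matching problem (EMMP)**. -/
theorem emmp_solvable_iff_rank
    (p mu md mf qr : ℕ)
    (Gu : Matrix (Fin p) (Fin mu) (RatFunc ℝ))
    (Gd : Matrix (Fin p) (Fin md) (RatFunc ℝ))
    (Gf : Matrix (Fin p) (Fin mf) (RatFunc ℝ))
    (Mrf : Matrix (Fin qr) (Fin mf) (RatFunc ℝ))
    (hMrfP : Mrf.IsProperR) (hMrfS : Mrf.IsStableR) :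
    (∃ (Q : Matrix (Fin qr) (Fin p ⊕ Fin mu) (RatFunc ℝ))
        (M : Matrix (Fin qr) (Fin qr) (RatFunc ℝ)),
        Q.IsProperR ∧ Q.IsStableR ∧
        M.IsProperR ∧ M.IsStableR ∧
        (∀ i j : Fin qr, i ≠ j → M i j = 0) ∧ M.det ≠ 0 ∧
        Q * Matrix.fromRows Gu (1 : Matrix (Fin mu) (Fin mu) (RatFunc ℝ)) = 0 ∧
        Q * Matrix.fromRows Gd (0 : Matrix (Fin mu) (Fin md) (RatFunc ℝ)) = 0 ∧
        Q * Matrix.fromRows Gf (0 : Matrix (Fin mu) (Fin mf) (RatFunc ℝ)) = M * Mrf) ↔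
      (Matrix.fromCols Gd Gf).rank =
        (Matrix.fromBlocks Gd Gf (0 : Matrix (Fin qr) (Fin md) (RatFunc ℝ)) Mrf).rank := by
  classical
  constructor
  · -- Forward direction
    rintro ⟨Q, M, _hQP, _hQS, _hMP, _hMS, _hMdiag, hMdet, hQu, hQd, hQf⟩
    -- split Q into its two column blocks
    set Q1 : Matrix (Fin qr) (Fin p) (RatFunc ℝ) := Matrix.of fun i j => Q i (Sum.inl j)
      with hQ1
    set Q2 : Matrix (Fin qr) (Fin mu) (RatFunc ℝ) := Matrix.of fun i j => Q i (Sum.inr j)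
      with hQ2
    have hQsplit : Q = fromCols Q1 Q2 := by
      ext i (j | j) <;> rfl
    have hQd' : Q1 * Gd = 0 := by
      have := hQd
      rw [hQsplit, fromCols_mul_fromRows] at this
      simpa using this
    have hQf' : Q1 * Gf = M * Mrf := by
      have := hQf
      rw [hQsplit, fromCols_mul_fromRows] at this
      simpa using this
    have hMunit : IsUnit M.det := isUnit_iff_ne_zero.mpr hMdet
    set C : Matrix (Fin qr) (Fin p) (RatFunc ℝ) := M⁻¹ * Q1 with hC
    have hCd : C * Gd = 0 := by
      rw [hC, Matrix.mul_assoc, hQd', Matrix.mul_zero]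
    have hCf : C * Gf = Mrf := by
      rw [hC, Matrix.mul_assoc, hQf', ← Matrix.mul_assoc, Matrix.nonsing_inv_mul M hMunit,
        Matrix.one_mul]
    have hblocks : fromBlocks Gd Gf (0 : Matrix (Fin qr) (Fin md) (RatFunc ℝ)) Mrf =
        fromRows (fromCols Gd Gf) (C * fromCols Gd Gf) := by
      rw [mul_fromCols, hCd, hCf, fromRows_fromCols_eq_fromBlocks]
    rw [hblocks, rank_fromRows_mul]
  · -- Backward direction
    intro hrank
    have hblocks : fromBlocks Gd Gf (0 : Matrix (Fin qr) (Fin md) (RatFunc ℝ)) Mrf =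
        fromRows (fromCols Gd Gf)
          (fromCols (0 : Matrix (Fin qr) (Fin md) (RatFunc ℝ)) Mrf) := by
      rw [fromRows_fromCols_eq_fromBlocks]
    rw [hblocks] at hrank
    obtain ⟨Y, hY⟩ := exists_eq_mul_of_rank_fromRows _ _ hrank
    rw [mul_fromCols] at hY
    obtain ⟨hYd, hYf⟩ := (fromCols_inj.eq_iff).mp hY
    -- Y * Gd = 0 and Y * Gf = Mrf (hYd : 0 = Y * Gd, hYf : Mrf = Y * Gf)
    set Y' : Matrix (Fin qr) (Fin p ⊕ Fin mu) (RatFunc ℝ) :=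
      fromCols Y (-(Y * Gu)) with hY'
    -- choose the scaling for each row
    have hscale := fun i : Fin qr => exists_row_scaling (fun j => Y' i j)
    choose m hm0 hmP hmS hmq using hscale
    refine ⟨Matrix.diagonal m * Y', Matrix.diagonal m, ?_, ?_, ?_, ?_, ?_, ?_, ?_, ?_, ?_⟩
    · intro i j
      rw [Matrix.diagonal_mul]
      exact (hmq i j).1
    · intro i j
      rw [Matrix.diagonal_mul]
      exact (hmq i j).2
    · intro i j
      by_cases h : i = j
      · subst h
        rw [Matrix.diagonal_apply_eq]
        exact hmP i
      · rw [Matrix.diagonal_apply_ne _ h]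
        exact isProperR_zero
    · intro i j
      by_cases h : i = j
      · subst h
        rw [Matrix.diagonal_apply_eq]
        exact hmS i
      · rw [Matrix.diagonal_apply_ne _ h]
        exact isStableR_zero
    · intro i j hij
      exact Matrix.diagonal_apply_ne _ hij
    · rw [Matrix.det_diagonal]
      exact Finset.prod_ne_zero_iff.mpr fun i _ => hm0 i
    · rw [Matrix.mul_assoc, hY', fromCols_mul_fromRows]
      simp
    · rw [Matrix.mul_assoc, hY', fromCols_mul_fromRows, ← hYd]
      simp
    · rw [Matrix.mul_assoc, hY', fromCols_mul_fromRows, ← hYf]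
      simp

end
end

section
/- For a given n_b × m_f structure matrix S without zero columns, the soft approximate fault detection and isolation problem (soft AFDIP) for the system y = G_u u + G_d d + G_f f + G_w w is solvable if and only if the exact fault detection problem (EFDP) is solvable. -/
/-!
Statement 11: For a given n_b × m_f structure matrix S without zero columns, the
soft approximate fault detection and isolation problem (soft AFDIP) for the
system y = G_u u + G_d d + G_f f + G_w w is solvable if and only if the exact
fault detection problem (EFDP) is solvable.
-/

open Matrix Polynomial

set_option maxHeartbeats 1000000
set_option synthInstance.maxHeartbeats 400000

noncomputable section

/-- Solvability of the soft AFDIP for the structure matrix `S`: for every `ε > 0`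
there is a bank of `n_b` proper stable filters decoupling `u` and `d` with stable
fault and noise channels, achieving `S_{R̃_f} = S` (the blocks selected by `S`
are nonzero) while the complementary fault blocks `R̄_f` and the noise channels
`R_w` have `H∞`-norm smaller than `ε`. -/
def SoftAFDIPSolvable {p mu md mf mw nb : ℕ}
    (Gu : Matrix (Fin p) (Fin mu) (RatFunc ℝ))
    (Gd : Matrix (Fin p) (Fin md) (RatFunc ℝ))
    (Gf : Matrix (Fin p) (Fin mf) (RatFunc ℝ))
    (Gw : Matrix (Fin p) (Fin mw) (RatFunc ℝ))
    (S : Fin nb → Fin mf → Bool) : Prop :=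
  ∀ ε : ℝ, 0 < ε →
    ∃ (q : Fin nb → ℕ)
      (Q : ∀ i : Fin nb, Matrix (Fin (q i)) (Fin p ⊕ Fin mu) (RatFunc ℝ)),
      ∀ i : Fin nb,
        (Q i).IsProperR ∧ (Q i).IsStableR ∧
        Q i * Matrix.fromRows Gu (1 : Matrix (Fin mu) (Fin mu) (RatFunc ℝ)) = 0 ∧
        Q i * Matrix.fromRows Gd (0 : Matrix (Fin mu) (Fin md) (RatFunc ℝ)) = 0 ∧
        (Q i * Matrix.fromRows Gf (0 : Matrix (Fin mu) (Fin mf) (RatFunc ℝ))).IsStableR ∧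
        (Q i * Matrix.fromRows Gw (0 : Matrix (Fin mu) (Fin mw) (RatFunc ℝ))).IsStableR ∧
        (∀ j : Fin mf, S i j = true →
          Q i * Matrix.fromRows (colMat Gf j)
              (0 : Matrix (Fin mu) (Fin 1) (RatFunc ℝ)) ≠ 0) ∧
        (∀ j : Fin mf, S i j = false →
          hinfNorm (Q i * Matrix.fromRows (colMat Gf j)
              (0 : Matrix (Fin mu) (Fin 1) (RatFunc ℝ))) < ε) ∧
        hinfNorm (Q i * Matrix.fromRows Gw
            (0 : Matrix (Fin mu) (Fin mw) (RatFunc ℝ))) < ε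


/-! ### Auxiliary lemmas -/

private lemma root_of_dvd {p q : Polynomial ℝ} (h : p ∣ q) {z : ℂ}
    (hz : (p.map (algebraMap ℝ ℂ)).IsRoot z) : (q.map (algebraMap ℝ ℂ)).IsRoot z := by
  obtain ⟨r, rfl⟩ := h
  rw [Polynomial.map_mul, Polynomial.IsRoot, Polynomial.eval_mul, hz, zero_mul]

private lemma stable_of_eq_div {f : RatFunc ℝ} {p q : Polynomial ℝ} (hq : q ≠ 0)
    (h : f = algebraMap _ _ p / algebraMap _ _ q)
    (hroots : ∀ z : ℂ, (q.map (algebraMap ℝ ℂ)).IsRoot z → z.re < 0) :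
    f.IsStableR := by
  intro z hz
  have hdvd : f.denom ∣ q := (RatFunc.denom_dvd hq).mpr ⟨p, h⟩
  exact hroots z (root_of_dvd hdvd hz)

private lemma proper_of_eq_div {f : RatFunc ℝ} {p q : Polynomial ℝ} (hq : q ≠ 0)
    (h : f = algebraMap _ _ p / algebraMap _ _ q) (hdeg : p.natDegree ≤ q.natDegree) :
    f.IsProperR := by
  by_cases hf : f = 0
  · simp [hf, RatFunc.IsProperR]
  have key := (RatFunc.num_mul_eq_mul_denom_iff hq).mpr h
  have hp : p ≠ 0 := by
    rintro rfl
    rw [map_zero, zero_div] at h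
    exact hf h
  have h1 : f.num ≠ 0 := RatFunc.num_ne_zero hf
  have h2 := congrArg Polynomial.natDegree key
  rw [Polynomial.natDegree_mul h1 hq, Polynomial.natDegree_mul hp (RatFunc.denom_ne_zero f)] at h2
  unfold RatFunc.IsProperR
  omega

private lemma stable_mul {f g : RatFunc ℝ} (hf : f.IsStableR) (hg : g.IsStableR) :
    (f * g).IsStableR := by
  have hrep : f * g = algebraMap _ _ (f.num * g.num) / algebraMap _ _ (f.denom * g.denom) := by
    conv_lhs => rw [← RatFunc.num_div_denom f, ← RatFunc.num_div_denom g]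
    rw [div_mul_div_comm, ← _root_.map_mul, ← _root_.map_mul]
  refine stable_of_eq_div (mul_ne_zero (RatFunc.denom_ne_zero f) (RatFunc.denom_ne_zero g)) hrep ?_
  intro z hz
  rw [Polynomial.map_mul, Polynomial.IsRoot, Polynomial.eval_mul] at hz
  rcases mul_eq_zero.mp hz with h | h
  · exact hf z h
  · exact hg z h

private lemma proper_mul {f g : RatFunc ℝ} (hf : f.IsProperR) (hg : g.IsProperR) :
    (f * g).IsProperR := by
  have hrep : f * g = algebraMap _ _ (f.num * g.num) / algebraMap _ _ (f.denom * g.denom) := by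
    conv_lhs => rw [← RatFunc.num_div_denom f, ← RatFunc.num_div_denom g]
    rw [div_mul_div_comm, ← _root_.map_mul, ← _root_.map_mul]
  refine proper_of_eq_div (mul_ne_zero (RatFunc.denom_ne_zero f) (RatFunc.denom_ne_zero g)) hrep ?_
  calc (f.num * g.num).natDegree ≤ f.num.natDegree + g.num.natDegree :=
        Polynomial.natDegree_mul_le
    _ ≤ f.denom.natDegree + g.denom.natDegree := add_le_add hf hg
    _ = (f.denom * g.denom).natDegree :=
        (Polynomial.natDegree_mul (RatFunc.denom_ne_zero f) (RatFunc.denom_ne_zero g)).symm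

private lemma stable_C (c : ℝ) : (RatFunc.C c).IsStableR := by
  refine stable_of_eq_div (p := Polynomial.C c) one_ne_zero ?_ ?_
  · rw [_root_.map_one, div_one, RatFunc.algebraMap_C]
  · intro z hz
    simp [Polynomial.IsRoot] at hz

private lemma proper_C (c : ℝ) : (RatFunc.C c).IsProperR := by
  refine proper_of_eq_div (p := Polynomial.C c) one_ne_zero ?_ ?_
  · rw [_root_.map_one, div_one, RatFunc.algebraMap_C]
  · simp

private lemma eval_C_mul (c : ℝ) (hc : c ≠ 0) (f : RatFunc ℝ) (x : ℂ) :
    RatFunc.eval (algebraMap ℝ ℂ) x (RatFunc.C c * f)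
      = (c : ℂ) * RatFunc.eval (algebraMap ℝ ℂ) x f := by
  by_cases hd : Polynomial.eval₂ (algebraMap ℝ ℂ) x f.denom = 0
  · rw [RatFunc.eval_eq_zero_of_eval₂_denom_eq_zero hd, mul_zero]
    apply RatFunc.eval_eq_zero_of_eval₂_denom_eq_zero
    have h2 : f = RatFunc.C c⁻¹ * (RatFunc.C c * f) := by
      rw [← mul_assoc, ← _root_.map_mul, inv_mul_cancel₀ hc, _root_.map_one, one_mul]
    have h1 : f.denom ∣ (RatFunc.C c * f).denom := by
      have h3 := RatFunc.denom_mul_dvd (RatFunc.C c⁻¹) (RatFunc.C c * f)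
      rw [← h2, RatFunc.denom_C, one_mul] at h3
      exact h3
    exact Polynomial.eval₂_eq_zero_of_dvd_of_eval₂_eq_zero _ _ h1 hd
  · have hC : Polynomial.eval₂ (algebraMap ℝ ℂ) x (RatFunc.C c).denom ≠ 0 := by
      rw [RatFunc.denom_C]
      simp
    rw [RatFunc.eval_mul _ _ hC hd, RatFunc.eval_C]
    norm_num

private lemma hinfNorm_smul {m n : Type*} [Fintype m] [Fintype n] {c : ℝ} (hc : 0 < c)
    (M : Matrix m n (RatFunc ℝ)) : hinfNorm (c • M) = c * hinfNorm M := by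
  unfold hinfNorm
  simp_rw [Matrix.smul_apply, RatFunc.smul_eq_C_mul, eval_C_mul c hc.ne', norm_mul,
    Complex.norm_real, Real.norm_eq_abs, abs_of_pos hc, ← Real.mul_iSup_of_nonneg hc.le]

/-- **Solvability of the soft AFDIP**: for a structure matrix without zero
columns, the soft AFDIP is solvable iff the EFDP is solvable. -/
theorem soft_afdip_solvable_iff_efdp
    (p mu md mf mw nb : ℕ)
    (Gu : Matrix (Fin p) (Fin mu) (RatFunc ℝ))
    (Gd : Matrix (Fin p) (Fin md) (RatFunc ℝ))
    (Gf : Matrix (Fin p) (Fin mf) (RatFunc ℝ))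
    (Gw : Matrix (Fin p) (Fin mw) (RatFunc ℝ))
    (S : Fin nb → Fin mf → Bool)
    (hS : ∀ j : Fin mf, ∃ i : Fin nb, S i j = true) :
    SoftAFDIPSolvable Gu Gd Gf Gw S ↔ EFDPSolvable Gu Gd Gf := by
  constructor
  · -- soft AFDIP solvable → EFDP solvable: stack the bank of filters
    intro hsoft
    obtain ⟨q, Qb, h⟩ := hsoft 1 one_pos
    classical
    let T := Σ i : Fin nb, Fin (q i)
    let e : T ≃ Fin (Fintype.card T) := Fintype.equivFin T
    let Q : Matrix (Fin (Fintype.card T)) (Fin p ⊕ Fin mu) (RatFunc ℝ) :=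
      Matrix.of fun k c => Qb (e.symm k).1 (e.symm k).2 c
    have key : ∀ (md' : ℕ) (M : Matrix (Fin p ⊕ Fin mu) (Fin md') (RatFunc ℝ))
        (k : Fin (Fintype.card T)) (c : Fin md'),
        (Q * M) k c = (Qb (e.symm k).1 * M) (e.symm k).2 c := by
      intro md' M k c
      simp [Q, Matrix.mul_apply]
    refine ⟨Fintype.card T, Q, ?_, ?_, ?_, ?_, ?_, ?_⟩
    · intro k c
      exact (h (e.symm k).1).1 (e.symm k).2 c
    · intro k c
      exact (h (e.symm k).1).2.1 (e.symm k).2 c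
    · ext k c
      rw [key, (h (e.symm k).1).2.2.1]
      simp
    · ext k c
      rw [key, (h (e.symm k).1).2.2.2.1]
      simp
    · intro k c
      rw [key]
      exact (h (e.symm k).1).2.2.2.2.1 (e.symm k).2 c
    · intro j
      obtain ⟨i, hi⟩ := hS j
      have hne := (h i).2.2.2.2.2.2.1 j hi
      have hex : ∃ r s, (Qb i * Matrix.fromRows (colMat Gf j)
          (0 : Matrix (Fin mu) (Fin 1) (RatFunc ℝ))) r s ≠ 0 := by
        by_contra hall
        push_neg at hall
        exact hne (by ext r s; simpa using hall r s)
      obtain ⟨r, s, hrs⟩ := hex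
      intro h0
      apply hrs
      have h1 := congrFun (congrFun h0 (e ⟨i, r⟩)) s
      rw [key _ _ (e ⟨i, r⟩) s, Equiv.symm_apply_apply] at h1
      exact h1
  · -- EFDP solvable → soft AFDIP solvable
    rintro ⟨q0, Q0, hP, hSt, hu, hd, hf, hnz⟩
    classical
    set R : Matrix (Fin q0) (Fin mw) (RatFunc ℝ) := Q0 * Matrix.fromRows Gw 0 with hR
    set D : Polynomial ℝ := ∏ i : Fin q0, ∏ j : Fin mw, (R i j).denom with hD
    have hD0 : D ≠ 0 := Finset.prod_ne_zero_iff.mpr fun i _ =>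
      Finset.prod_ne_zero_iff.mpr fun j _ => RatFunc.denom_ne_zero _
    set β : Polynomial ℝ := (Polynomial.X + Polynomial.C 1) ^ D.natDegree with hβ
    have hβ0 : β ≠ 0 := pow_ne_zero _ (Polynomial.monic_X_add_C 1).ne_zero
    have hβroots : ∀ z : ℂ, (β.map (algebraMap ℝ ℂ)).IsRoot z → z.re < 0 := by
      intro z hz
      rw [hβ, Polynomial.map_pow, Polynomial.map_add, Polynomial.map_X, Polynomial.map_C,
        Polynomial.IsRoot, Polynomial.eval_pow, Polynomial.eval_add, Polynomial.eval_X,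
        Polynomial.eval_C] at hz
      have hn : D.natDegree ≠ 0 := by
        intro h0
        rw [h0, pow_zero] at hz
        exact one_ne_zero hz
      have hz1 : z + algebraMap ℝ ℂ 1 = 0 := (pow_eq_zero_iff hn).mp hz
      have hz2 : z = -1 := by
        have : algebraMap ℝ ℂ 1 = 1 := map_one _
        rw [this] at hz1
        linear_combination hz1
      rw [hz2]
      norm_num
    set g : RatFunc ℝ := algebraMap _ _ D / algebraMap _ _ β with hg
    have hgP : g.IsProperR := by
      refine proper_of_eq_div hβ0 hg ?_
      rw [hβ, Polynomial.natDegree_pow, Polynomial.natDegree_X_add_C, mul_one]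
    have hgS : g.IsStableR := stable_of_eq_div hβ0 hg hβroots
    set Q1 : Matrix (Fin q0) (Fin p ⊕ Fin mu) (RatFunc ℝ) := g • Q0 with hQ1
    have hgR : ∀ (i : Fin q0) (j : Fin mw),
        ∃ E : Polynomial ℝ, g * R i j = algebraMap _ _ E / algebraMap _ _ β := by
      intro i j
      have hdvd : (R i j).denom ∣ D := by
        refine dvd_trans ?_ (Finset.dvd_prod_of_mem _ (Finset.mem_univ i))
        exact Finset.dvd_prod_of_mem _ (Finset.mem_univ j)
      obtain ⟨E, hE⟩ := hdvd
      refine ⟨E * (R i j).num, ?_⟩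
      rw [hg]
      conv_lhs => rw [← RatFunc.num_div_denom (R i j)]
      rw [div_mul_div_comm, div_eq_div_iff
        (mul_ne_zero (RatFunc.algebraMap_ne_zero hβ0)
          (RatFunc.algebraMap_ne_zero (RatFunc.denom_ne_zero _)))
        (RatFunc.algebraMap_ne_zero hβ0)]
      simp only [← _root_.map_mul]
      congr 1
      rw [hE]
      ring
    intro ε hε
    set B : ℝ := (∑ j : Fin mf, |hinfNorm (Q1 * Matrix.fromRows (colMat Gf j)
          (0 : Matrix (Fin mu) (Fin 1) (RatFunc ℝ)))|)
        + |hinfNorm (Q1 * Matrix.fromRows Gw (0 : Matrix (Fin mu) (Fin mw) (RatFunc ℝ)))| with hB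
    have hB0 : 0 ≤ B := add_nonneg (Finset.sum_nonneg fun _ _ => abs_nonneg _) (abs_nonneg _)
    set c : ℝ := ε / (2 * (B + 1)) with hc
    have hc0 : 0 < c := div_pos hε (by linarith)
    have hcB : ∀ N : ℝ, N ≤ B → c * N < ε := by
      intro N hN
      have h1 : c * (B + 1) = ε / 2 := by
        rw [hc]
        field_simp
      nlinarith
    have hCc : RatFunc.C c ≠ 0 := by
      rw [← RatFunc.algebraMap_C]
      exact RatFunc.algebraMap_ne_zero (Polynomial.C_ne_zero.mpr hc0.ne')
    have hg0 : g ≠ 0 := div_ne_zero (RatFunc.algebraMap_ne_zero hD0)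
      (RatFunc.algebraMap_ne_zero hβ0)
    have hent : ∀ (md' : ℕ) (M : Matrix (Fin p ⊕ Fin mu) (Fin md') (RatFunc ℝ))
        (r : Fin q0) (s : Fin md'),
        (((c • Q1) * M) : Matrix (Fin q0) (Fin md') (RatFunc ℝ)) r s
          = RatFunc.C c * (g * (Q0 * M) r s) := by
      intro md' M r s
      rw [hQ1, Matrix.smul_mul, Matrix.smul_mul, Matrix.smul_apply, Matrix.smul_apply,
        RatFunc.smul_eq_C_mul, smul_eq_mul]
    have hentQ : ∀ (r : Fin q0) (s : Fin p ⊕ Fin mu),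
        (c • Q1) r s = RatFunc.C c * (g * Q0 r s) := by
      intro r s
      rw [hQ1, Matrix.smul_apply, Matrix.smul_apply, RatFunc.smul_eq_C_mul, smul_eq_mul]
    have hA : (c • Q1).IsProperR := fun r s => by
      rw [hentQ]
      exact proper_mul (proper_C c) (proper_mul hgP (hP r s))
    have hB' : (c • Q1).IsStableR := fun r s => by
      rw [hentQ]
      exact stable_mul (stable_C c) (stable_mul hgS (hSt r s))
    have hU : (c • Q1) * Matrix.fromRows Gu (1 : Matrix (Fin mu) (Fin mu) (RatFunc ℝ)) = 0 := by
      rw [hQ1, Matrix.smul_mul, Matrix.smul_mul, hu, smul_zero, smul_zero]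
    have hD' : (c • Q1) * Matrix.fromRows Gd (0 : Matrix (Fin mu) (Fin md) (RatFunc ℝ)) = 0 := by
      rw [hQ1, Matrix.smul_mul, Matrix.smul_mul, hd, smul_zero, smul_zero]
    have hF : ((c • Q1) * Matrix.fromRows Gf
        (0 : Matrix (Fin mu) (Fin mf) (RatFunc ℝ))).IsStableR := fun r s => by
      rw [hent]
      exact stable_mul (stable_C c) (stable_mul hgS (hf r s))
    have hW : ((c • Q1) * Matrix.fromRows Gw
        (0 : Matrix (Fin mu) (Fin mw) (RatFunc ℝ))).IsStableR := fun r s => by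
      rw [hent]
      obtain ⟨E, hE⟩ := hgR r s
      exact stable_mul (stable_C c) (stable_of_eq_div hβ0 hE hβroots)
    have hNZ : ∀ j : Fin mf, (c • Q1) * Matrix.fromRows (colMat Gf j)
        (0 : Matrix (Fin mu) (Fin 1) (RatFunc ℝ)) ≠ 0 := by
      intro j h0
      apply hnz j
      ext r s
      have h1 := congrFun (congrFun h0 r) s
      rw [hent] at h1
      have h1' : RatFunc.C c * (g * (Q0 * Matrix.fromRows (colMat Gf j)
          (0 : Matrix (Fin mu) (Fin 1) (RatFunc ℝ))) r s) = 0 := by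
        rw [h1]
        simp
      rcases mul_eq_zero.mp h1' with h2 | h2
      · exact absurd h2 hCc
      rcases mul_eq_zero.mp h2 with h3 | h3
      · exact absurd h3 hg0
      simpa using h3
    have hHF : ∀ j : Fin mf, hinfNorm ((c • Q1) * Matrix.fromRows (colMat Gf j)
        (0 : Matrix (Fin mu) (Fin 1) (RatFunc ℝ))) < ε := by
      intro j
      rw [Matrix.smul_mul, hinfNorm_smul hc0]
      apply hcB
      calc hinfNorm (Q1 * Matrix.fromRows (colMat Gf j)
            (0 : Matrix (Fin mu) (Fin 1) (RatFunc ℝ)))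
          ≤ |hinfNorm (Q1 * Matrix.fromRows (colMat Gf j)
            (0 : Matrix (Fin mu) (Fin 1) (RatFunc ℝ)))| := le_abs_self _
        _ ≤ ∑ j' : Fin mf, |hinfNorm (Q1 * Matrix.fromRows (colMat Gf j')
            (0 : Matrix (Fin mu) (Fin 1) (RatFunc ℝ)))| :=
            Finset.single_le_sum (f := fun j' : Fin mf => |hinfNorm (Q1 * Matrix.fromRows
              (colMat Gf j') (0 : Matrix (Fin mu) (Fin 1) (RatFunc ℝ)))|)
              (fun _ _ => abs_nonneg _) (Finset.mem_univ j)
        _ ≤ B := le_add_of_nonneg_right (abs_nonneg _)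
    have hHW : hinfNorm ((c • Q1) * Matrix.fromRows Gw
        (0 : Matrix (Fin mu) (Fin mw) (RatFunc ℝ))) < ε := by
      rw [Matrix.smul_mul, hinfNorm_smul hc0]
      apply hcB
      calc hinfNorm (Q1 * Matrix.fromRows Gw (0 : Matrix (Fin mu) (Fin mw) (RatFunc ℝ)))
          ≤ |hinfNorm (Q1 * Matrix.fromRows Gw (0 : Matrix (Fin mu) (Fin mw) (RatFunc ℝ)))| :=
            le_abs_self _
        _ ≤ B := le_add_of_nonneg_left (Finset.sum_nonneg fun _ _ => abs_nonneg _)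
    exact ⟨fun _ => q0, fun _ => c • Q1, fun i =>
      ⟨hA, hB', hU, hD', hF, hW, fun j _ => hNZ j, fun j _ => hHF j, hHW⟩⟩

end
end
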